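/- arXiv:math/0612745 — 2 statements merged into one kernel-verified Lean document; each statement's English description precedes it below -/
import Mathlib

section
/- Let f be holomorphic on Ω(c,C)^m × D_R^n with mixed asymptotic expansion a. Then for every j ∈ {1,…,n} the partial derivative ∂f/∂yⱼ (in the j-th disc variable) is holomorphic on Ω(c,C)^m × D_R^n and has mixed asymptotic expansion (α,β) ↦ (βⱼ + 1)·a(α, β + eⱼ), where eⱼ ∈ ℕ^n is the j-th unit vector. -/
noncomputable section
open scoped Classical

/-- Logarithmic model of a standard quadratic domain:
`Ω(c,C) = {z : Re z < log c - C·√|Im z|}`. -/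
def SQD (c C : ℝ) : Set ℂ := {z : ℂ | z.re < Real.log c - C * Real.sqrt |z.im|}

/-- The cartesian power `Ω(c,C)^m`. -/
def QDom (c C : ℝ) (m : ℕ) : Set (Fin m → ℂ) := {z | ∀ i, z i ∈ SQD c C}

/-- Open disc `D_R` of radius `R` centred at `0`. -/
def Disc (R : ℝ) : Set ℂ := {w : ℂ | ‖w‖ < R}

/-- Polydisc `D_R^n`. -/
def PDisc (R : ℝ) (n : ℕ) : Set (Fin n → ℂ) := {y | ∀ j, y j ∈ Disc R}

/-- The exponential monomial `exp⟨α,z⟩`. -/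
def expMono {m : ℕ} (α : Fin m → ℝ) (z : Fin m → ℂ) : ℂ :=
  Complex.exp (∑ i, (α i : ℂ) * z i)

/-- Euclidean norm of `E(z) = (exp (Re z₁), …, exp (Re z_m))`. -/
def eNorm {m : ℕ} (z : Fin m → ℂ) : ℝ :=
  Real.sqrt (∑ i, Real.exp ((z i).re) ^ 2)

/-- A generalized power series with natural support: nonnegative exponents, and in each
coordinate the set of exponents below any bound is finite. -/
def NaturalSeries {m : ℕ} (a : (Fin m → ℝ) → ℂ) : Prop :=
  (∀ α, a α ≠ 0 → ∀ i, 0 ≤ α i) ∧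
  ∀ i : Fin m, ∀ R : ℝ, 0 < R → {r : ℝ | (∃ α, a α ≠ 0 ∧ α i = r) ∧ r ≤ R}.Finite

/-- `f` has asymptotic expansion `a` on `Ω(c,C)^m`: for every `ν > 0` there is a smaller
standard quadratic domain on which `f` minus the partial sum of weight `≤ ν` is
`o(‖E(z)‖^ν)` as `‖E(z)‖ → 0`. -/
def HasAsymExp {m : ℕ} (c C : ℝ) (f : (Fin m → ℂ) → ℂ) (a : (Fin m → ℝ) → ℂ) : Prop :=
  NaturalSeries a ∧
  ∀ ν : ℝ, 0 < ν → ∃ c' C' : ℝ, 0 < c' ∧ 0 < C' ∧ SQD c' C' ⊆ SQD c C ∧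
    ∃ F : Finset (Fin m → ℝ),
      (∀ α, α ∈ F ↔ a α ≠ 0 ∧ ∑ i, α i ≤ ν) ∧
      ∀ ε : ℝ, 0 < ε → ∃ δ : ℝ, 0 < δ ∧
        ∀ z ∈ QDom c' C' m, eNorm z < δ →
          ‖f z - ∑ α ∈ F, a α * expMono α z‖ ≤ ε * eNorm z ^ ν

/-- Euclidean norm of `(E(z),y) = (exp Re z₁, …, exp Re z_m, |y₁|, …, |y_n|)`. -/
def mixedNorm {m n : ℕ} (z : Fin m → ℂ) (y : Fin n → ℂ) : ℝ :=
  Real.sqrt (∑ i, Real.exp ((z i).re) ^ 2 + ∑ j, ‖y j‖ ^ 2)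

/-- A mixed series: coefficient function with natural support in the first `m`
(real-exponent) coordinates. -/
def MixedNatural {m n : ℕ} (a : (Fin m → ℝ) → (Fin n → ℕ) → ℂ) : Prop :=
  (∀ α β, a α β ≠ 0 → ∀ i, 0 ≤ α i) ∧
  ∀ i : Fin m, ∀ R : ℝ, 0 < R →
    {r : ℝ | (∃ α β, a α β ≠ 0 ∧ α i = r) ∧ r ≤ R}.Finite

/-- `f` has mixed asymptotic expansion `a` on `Ω(c,C)^m × D_R^n`. -/
def HasMixedAsymExp {m n : ℕ} (c C R : ℝ)
    (f : ((Fin m → ℂ) × (Fin n → ℂ)) → ℂ)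
    (a : (Fin m → ℝ) → (Fin n → ℕ) → ℂ) : Prop :=
  MixedNatural a ∧
  ∀ ν : ℝ, 0 < ν → ∃ c' C' R' : ℝ, 0 < c' ∧ 0 < C' ∧ 0 < R' ∧ R' ≤ R ∧
    SQD c' C' ⊆ SQD c C ∧
    ∃ F : Finset ((Fin m → ℝ) × (Fin n → ℕ)),
      (∀ p, p ∈ F ↔ a p.1 p.2 ≠ 0 ∧ (∑ i, p.1 i) + (∑ j, (p.2 j : ℝ)) ≤ ν) ∧
      ∀ ε : ℝ, 0 < ε → ∃ δ : ℝ, 0 < δ ∧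
        ∀ z ∈ QDom c' C' m, ∀ y ∈ PDisc R' n, mixedNorm z y < δ →
          ‖f (z, y) - ∑ p ∈ F, a p.1 p.2 * expMono p.1 z * ∏ j, (y j) ^ (p.2 j)‖
            ≤ ε * mixedNorm z y ^ ν

open Metric Set Finset


variable {E : Type*} [NormedAddCommGroup E] [NormedSpace ℂ E]

/-- slice derivative: for `F` differentiable at `x + w₀ • v`, the one-variable slice
`w ↦ F (x + w • v)` has derivative `fderiv ℂ F (x + w₀ • v) v` at `w₀`. -/
lemma slice_hasDerivAt {F : E → ℂ} {x : E} {v : E} {w₀ : ℂ}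
    (hF : DifferentiableAt ℂ F (x + w₀ • v)) :
    HasDerivAt (fun w : ℂ => F (x + w • v)) (fderiv ℂ F (x + w₀ • v) v) w₀ := by
  have hγ : HasDerivAt (fun w : ℂ => x + w • v) v w₀ := by
    simpa using ((hasDerivAt_id w₀).smul_const v).const_add x
  have := hF.hasFDerivAt.comp_hasDerivAt w₀ hγ
  exact this

/-- Cauchy bound for the full Fréchet derivative. -/
lemma norm_fderiv_le_of_bound {F : E → ℂ} {T : Set E} (hT : IsOpen T)
    {q : E} {r M : ℝ} (hr : 0 < r) (hq : closedBall q r ⊆ T)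
    (hF : DifferentiableOn ℂ F T) (hM : ∀ x ∈ closedBall q r, ‖F x‖ ≤ M) :
    ‖fderiv ℂ F q‖ ≤ 2 * M / r := by
  have hM0 : 0 ≤ M := (norm_nonneg _).trans (hM q (mem_closedBall_self hr.le))
  refine ContinuousLinearMap.opNorm_le_bound _ (by positivity) fun u => ?_
  rcases eq_or_ne u 0 with rfl | hu
  · simp
  · have hnu : 0 < ‖u‖ := norm_pos_iff.mpr hu
    set R₀ : ℝ := (r / 2) / ‖u‖ with hR₀
    have hR₀pos : 0 < R₀ := by positivity
    have hmem : ∀ w : ℂ, w ∈ closedBall (0 : ℂ) R₀ → q + w • u ∈ closedBall q r := by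
      intro w hw
      simp only [mem_closedBall, dist_self_add_left] at hw ⊢
      calc ‖w • u‖ = ‖w‖ * ‖u‖ := norm_smul _ _
        _ ≤ R₀ * ‖u‖ := by
            have : dist w 0 ≤ R₀ := hw
            simpa [dist_eq_norm] using mul_le_mul_of_nonneg_right this (norm_nonneg u)
        _ ≤ r := by
            rw [hR₀, div_mul_cancel₀ _ hnu.ne']
            linarith
    have hdiff : DifferentiableOn ℂ (fun w : ℂ => F (q + w • u)) (closure (ball (0:ℂ) R₀)) := by
      rw [closure_ball (0 : ℂ) hR₀pos.ne']
      intro w hw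
      have hx : q + w • u ∈ T := hq (hmem w hw)
      exact ((hF.differentiableAt (hT.mem_nhds hx)).comp w
        (by simpa using ((differentiable_id.smul_const u).const_add q).differentiableAt
          )).differentiableWithinAt
    have hq0 : DifferentiableAt ℂ F (q + (0:ℂ) • u) := by
      simpa using hF.differentiableAt (hT.mem_nhds (hq (mem_closedBall_self hr.le)))
    have hD : HasDerivAt (fun w : ℂ => F (q + w • u)) (fderiv ℂ F (q + (0:ℂ) • u) u) 0 :=
      slice_hasDerivAt hq0
    have hbound : ∀ w ∈ sphere (0:ℂ) R₀, ‖F (q + w • u)‖ ≤ M := fun w hw =>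
      hM _ (hmem w (sphere_subset_closedBall hw))
    have := Complex.norm_deriv_le_of_forall_mem_sphere_norm_le hR₀pos
      (hdiff.diffContOnCl) hbound
    rw [hD.deriv] at this
    have h2 : M / R₀ = 2 * M / r * ‖u‖ := by
      rw [hR₀]
      field_simp
    simpa [zero_smul, add_zero, h2] using this

open intervalIntegral MeasureTheory in
lemma differentiableAt_fderiv_apply
    [MeasurableSpace E] [BorelSpace E] [FiniteDimensional ℂ E]
    {F : E → ℂ} {S : Set E} (hS : IsOpen S)
    (hF : DifferentiableOn ℂ F S) {v : E} (hv : ‖v‖ ≤ 1) {p₀ : E} (hp₀ : p₀ ∈ S) :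
    DifferentiableAt ℂ (fun p => fderiv ℂ F p v) p₀ := by
  obtain ⟨ε, hε, hball⟩ := Metric.isOpen_iff.mp hS p₀ hp₀
  set r : ℝ := ε / 7 with hrdef
  have hr0 : 0 < r := by positivity
  have hsub : closedBall p₀ (6 * r) ⊆ S :=
    (closedBall_subset_ball (by rw [hrdef]; linarith)).trans hball
  obtain ⟨M, hM⟩ := (isCompact_closedBall p₀ (6 * r)).exists_bound_of_continuousOn
    (hF.continuousOn.mono hsub)
  have hM0 : 0 ≤ M := (norm_nonneg _).trans (hM p₀ (mem_closedBall_self (by positivity)))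
  set K₁ : ℝ := 2 * M / r with hK₁def
  have hK₁ : ∀ q ∈ closedBall p₀ (4 * r), ‖fderiv ℂ F q‖ ≤ K₁ := by
    intro q hq
    refine norm_fderiv_le_of_bound hS hr0 ?_ hF ?_
    · refine (closedBall_subset_closedBall' ?_).trans hsub
      rw [mem_closedBall] at hq; linarith
    · intro x hx
      refine hM x ?_
      rw [mem_closedBall] at hx hq ⊢
      calc dist x p₀ ≤ dist x q + dist q p₀ := dist_triangle _ _ _
        _ ≤ 6 * r := by linarith
  set c : ℝ → ℂ := circleMap 0 (2 * r) with hcdef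
  have hcnorm : ∀ θ, ‖c θ‖ = 2 * r := by
    intro θ
    rw [hcdef]
    simpa [abs_of_pos (by positivity : (0:ℝ) < 2*r)] using
      norm_circleMap_zero (2 * r) θ
  have hcne : ∀ θ, c θ ≠ 0 := by
    intro θ h
    have := hcnorm θ
    rw [h, norm_zero] at this
    linarith
  set G : E → ℝ → ℂ := fun x θ => (c θ * Complex.I) • (((c θ) ^ 2)⁻¹ • F (x + c θ • v))
    with hGdef
  set G' : E → ℝ → E →L[ℂ] ℂ :=
    fun x θ => (c θ * Complex.I) • (((c θ) ^ 2)⁻¹ • fderiv ℂ F (x + c θ • v)) with hG'def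
  have hmem3 : ∀ x ∈ ball p₀ r, ∀ w : ℂ, ‖w‖ ≤ 2 * r → x + w • v ∈ closedBall p₀ (3 * r) := by
    intro x hx w hw
    rw [mem_closedBall]
    calc dist (x + w • v) p₀ ≤ dist (x + w • v) x + dist x p₀ := dist_triangle _ _ _
      _ ≤ ‖w‖ * ‖v‖ + r := by
          rw [dist_self_add_left, norm_smul]
          have := (mem_ball.mp hx).le
          gcongr
      _ ≤ 2 * r * 1 + r := by
          have : ‖w‖ * ‖v‖ ≤ 2 * r * 1 := by
            apply mul_le_mul hw hv (norm_nonneg _) (by positivity)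
          linarith
      _ = 3 * r := by ring
  have h3sub : closedBall p₀ (3 * r) ⊆ S :=
    (closedBall_subset_closedBall (by linarith)).trans hsub
  have hdiffat : ∀ x ∈ ball p₀ r, ∀ θ, DifferentiableAt ℂ F (x + c θ • v) := fun x hx θ =>
    hF.differentiableAt (hS.mem_nhds (h3sub (hmem3 x hx _ (hcnorm θ).le)))
  have hGdiff : ∀ θ : ℝ, ∀ x ∈ ball p₀ r, HasFDerivAt (fun x => G x θ) (G' x θ) x := by
    intro θ x hx
    have ht : HasFDerivAt (fun x : E => x + c θ • v) (ContinuousLinearMap.id ℂ E) x :=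
      (hasFDerivAt_id x).add_const _
    have hin : HasFDerivAt (fun x : E => F (x + c θ • v)) (fderiv ℂ F (x + c θ • v)) x := by
      have := ((hdiffat x hx θ).hasFDerivAt).comp x ht
      exact this
    exact (hin.const_smul (((c θ) ^ 2)⁻¹)).const_smul (c θ * Complex.I)
  have hGcont : ∀ x ∈ ball p₀ r, Continuous (fun θ => G x θ) := by
    intro x hx
    have h1 : Continuous fun θ => x + c θ • v :=
      continuous_const.add ((continuous_circleMap 0 (2 * r)).smul continuous_const)
    have h2 : Continuous fun θ => F (x + c θ • v) :=
      hF.continuousOn.comp_continuous h1 fun θ => h3sub (hmem3 x hx _ (hcnorm θ).le)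
    exact ((continuous_circleMap 0 (2 * r)).mul continuous_const).smul
      ((((continuous_circleMap 0 (2 * r)).pow 2).inv₀ fun θ => pow_ne_zero 2 (hcne θ)).smul h2)
  have key := hasFDerivAt_integral_of_dominated_of_fderiv_le (𝕜 := ℂ) (μ := volume)
    (F := G) (F' := G') (x₀ := p₀) (a := 0) (b := 2 * Real.pi)
    (bound := fun _ => (2 * r)⁻¹ * K₁) (ball_mem_nhds p₀ hr0)
    ?_ ?_ ?_ ?_ ?_ ?_
  · -- conclude
    have hΦ : HasFDerivAt (fun x => (2 * Real.pi * Complex.I : ℂ)⁻¹ •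
        ∫ θ in (0:ℝ)..(2 * Real.pi), G x θ)
        ((2 * Real.pi * Complex.I : ℂ)⁻¹ • ∫ θ in (0:ℝ)..(2 * Real.pi), G' p₀ θ) p₀ :=
      key.const_smul ((2 * Real.pi * Complex.I : ℂ)⁻¹)
    refine hΦ.differentiableAt.congr_of_eventuallyEq ?_
    filter_upwards [ball_mem_nhds p₀ hr0] with x hx
    -- Cauchy formula
    have hs : DifferentiableOn ℂ (fun w : ℂ => F (x + w • v)) (ball (0 : ℂ) (3 * r)) := by
      intro w hw
      have hq : x + w • v ∈ S := by
        refine hsub ?_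
        rw [mem_closedBall]
        calc dist (x + w • v) p₀ ≤ dist (x + w • v) x + dist x p₀ := dist_triangle _ _ _
          _ ≤ ‖w‖ * ‖v‖ + r := by
              rw [dist_self_add_left, norm_smul]
              have := (mem_ball.mp hx).le
              gcongr
          _ ≤ 3 * r * 1 + r := by
              have hw' : ‖w‖ ≤ 3 * r := by
                have := mem_ball_zero_iff.mp hw
                linarith [this.le]
              have : ‖w‖ * ‖v‖ ≤ 3 * r * 1 :=
                mul_le_mul hw' hv (norm_nonneg _) (by positivity)
              linarith
          _ ≤ 6 * r := by linarith
      exact (slice_hasDerivAt (hF.differentiableAt (hS.mem_nhds hq))).differentiableAt.differentiableWithinAt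
    have hderiv0 : deriv (fun w : ℂ => F (x + w • v)) 0 = fderiv ℂ F x v := by
      have hx' : DifferentiableAt ℂ F (x + (0:ℂ) • v) := by
        simpa using hF.differentiableAt (hS.mem_nhds (hsub ((closedBall_subset_closedBall (by linarith)) (ball_subset_closedBall hx))))
      have := (slice_hasDerivAt hx').deriv
      rw [this]
      simp
    have hcb : closedBall (0:ℂ) (2 * r) ⊆ ball (0:ℂ) (3 * r) :=
      closedBall_subset_ball (by linarith)
    have hcf := Complex.two_pi_I_inv_smul_circleIntegral_sub_sq_inv_smul_of_differentiable
      isOpen_ball hcb hs (mem_ball_self (by positivity) : (0:ℂ) ∈ ball 0 (2*r))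
    rw [hderiv0] at hcf
    rw [← hcf]
    congr 1
    simp only [circleIntegral, deriv_circleMap, sub_zero]
    rfl
  · -- hF_meas
    filter_upwards [ball_mem_nhds p₀ hr0] with x hx
    exact (hGcont x hx).aestronglyMeasurable
  · exact (hGcont p₀ (mem_ball_self hr0)).intervalIntegrable 0 (2 * Real.pi)
  · -- hF'_meas
    have h1 : Measurable fun θ => fderiv ℂ F (p₀ + c θ • v) :=
      (measurable_fderiv ℂ F).comp
        (continuous_const.add ((continuous_circleMap 0 (2 * r)).smul continuous_const)).measurable
    have h2 : Measurable fun θ => (((c θ) ^ 2)⁻¹ : ℂ) • fderiv ℂ F (p₀ + c θ • v) :=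
      (((continuous_circleMap 0 (2 * r)).pow 2).measurable.inv).smul h1
    have h3 : Measurable (G' p₀) :=
      ((continuous_circleMap 0 (2 * r)).mul continuous_const).measurable.smul h2
    exact h3.aestronglyMeasurable
  · -- h_bound
    refine Filter.Eventually.of_forall fun θ => fun _ x hx => ?_
    have hq := hmem3 x hx _ (hcnorm θ).le
    have hb := hK₁ _ ((closedBall_subset_closedBall (by linarith)) hq)
    calc ‖G' x θ‖ = ‖c θ * Complex.I‖ * (‖((c θ) ^ 2)⁻¹‖ * ‖fderiv ℂ F (x + c θ • v)‖) := by
          simp only [hG'def]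
          rw [norm_smul (c θ * Complex.I) ((c θ ^ 2)⁻¹ • fderiv ℂ F (x + c θ • v)),
            norm_smul ((c θ ^ 2)⁻¹) (fderiv ℂ F (x + c θ • v))]
      _ = (2 * r) * (((2 * r) ^ 2)⁻¹ * ‖fderiv ℂ F (x + c θ • v)‖) := by
          rw [norm_mul, Complex.norm_I, mul_one, hcnorm, norm_inv, norm_pow, hcnorm]
      _ ≤ (2 * r) * (((2 * r) ^ 2)⁻¹ * K₁) := by gcongr
      _ = (2 * r)⁻¹ * K₁ := by field_simp
  · exact intervalIntegrable_const
  · exact Filter.Eventually.of_forall fun θ => fun _ x hx => hGdiff θ x hx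


lemma mixedNorm_nonneg {m n : ℕ} (z : Fin m → ℂ) (y : Fin n → ℂ) : 0 ≤ mixedNorm z y :=
  Real.sqrt_nonneg _

lemma norm_apply_le_mixedNorm {m n : ℕ} (z : Fin m → ℂ) (y : Fin n → ℂ) (k : Fin n) :
    ‖y k‖ ≤ mixedNorm z y := by
  have h1 : ‖y k‖ ^ 2 ≤ ∑ i, Real.exp ((z i).re) ^ 2 + ∑ l, ‖y l‖ ^ 2 := by
    have h2 : ‖y k‖ ^ 2 ≤ ∑ l, ‖y l‖ ^ 2 :=
      Finset.single_le_sum (fun l _ => sq_nonneg ‖y l‖) (mem_univ k)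
    have h3 : (0:ℝ) ≤ ∑ i, Real.exp ((z i).re) ^ 2 :=
      Finset.sum_nonneg fun i _ => sq_nonneg _
    linarith
  calc ‖y k‖ = Real.sqrt (‖y k‖ ^ 2) := (Real.sqrt_sq (norm_nonneg _)).symm
    _ ≤ mixedNorm z y := Real.sqrt_le_sqrt h1

lemma mixedNorm_shift_le {m n : ℕ} (z : Fin m → ℂ) (y : Fin n → ℂ) (j : Fin n) {w : ℂ} {ρ : ℝ}
    (hM : mixedNorm z y ≤ ρ) (hw : ‖w‖ ≤ ρ) :
    mixedNorm z (y + w • (Pi.single j 1 : Fin n → ℂ)) ≤ 3 * ρ := by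
  have hρ : 0 ≤ ρ := (mixedNorm_nonneg z y).trans hM
  have hcoord : ∀ k, k ≠ j → (y + w • (Pi.single j 1 : Fin n → ℂ)) k = y k := by
    intro k hk; simp [Pi.single_eq_of_ne hk]
  have hcj : (y + w • (Pi.single j 1 : Fin n → ℂ)) j = y j + w := by simp
  set y' := y + w • (Pi.single j 1 : Fin n → ℂ) with hy'
  have hsq : (mixedNorm z y) ^ 2 = ∑ i, Real.exp ((z i).re) ^ 2 + ∑ l, ‖y l‖ ^ 2 := by
    rw [mixedNorm, Real.sq_sqrt]
    positivity
  have hsplit : ∑ l, ‖y' l‖ ^ 2 = ‖y' j‖ ^ 2 + ∑ l ∈ univ.erase j, ‖y' l‖ ^ 2 :=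
    (Finset.add_sum_erase _ _ (mem_univ j)).symm
  have herase : ∑ l ∈ univ.erase j, ‖y' l‖ ^ 2 ≤ ∑ l, ‖y l‖ ^ 2 := by
    have : ∀ l ∈ univ.erase j, ‖y' l‖ ^ 2 = ‖y l‖ ^ 2 := by
      intro l hl
      rw [hcoord l (Finset.mem_erase.mp hl).1]
    rw [Finset.sum_congr rfl this]
    exact Finset.sum_le_sum_of_subset_of_nonneg (Finset.erase_subset _ _)
      (fun l _ _ => sq_nonneg _)
  have hyj : ‖y' j‖ ≤ 2 * ρ := by
    rw [hcj]
    calc ‖y j + w‖ ≤ ‖y j‖ + ‖w‖ := norm_add_le _ _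
      _ ≤ mixedNorm z y + ρ := add_le_add (norm_apply_le_mixedNorm z y j) hw
      _ ≤ 2 * ρ := by linarith
  have hbig : ∑ i, Real.exp ((z i).re) ^ 2 + ∑ l, ‖y' l‖ ^ 2 ≤ (3 * ρ) ^ 2 := by
    have h1 : ‖y' j‖ ^ 2 ≤ (2*ρ)^2 := by
      have := sq_nonneg (‖y' j‖); nlinarith [norm_nonneg (y' j)]
    have h2 : mixedNorm z y ^ 2 ≤ ρ ^ 2 := by nlinarith [mixedNorm_nonneg z y]
    nlinarith [hsq, hsplit, herase]
  calc mixedNorm z y' ≤ Real.sqrt ((3*ρ)^2) := Real.sqrt_le_sqrt hbig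
    _ = 3 * ρ := Real.sqrt_sq (by linarith)

lemma prod_shift {n : ℕ} (y : Fin n → ℂ) (j : Fin n) (w : ℂ) (β : Fin n → ℕ) :
    ∏ k, ((y + w • (Pi.single j 1 : Fin n → ℂ)) k) ^ β k
      = (y j + w) ^ β j * ∏ k ∈ univ.erase j, y k ^ β k := by
  rw [← Finset.mul_prod_erase univ (fun k => ((y + w • (Pi.single j 1 : Fin n → ℂ)) k) ^ β k)
    (mem_univ j)]
  congr 1
  · congr 1; simp
  · refine Finset.prod_congr rfl fun k hk => ?_
    congr 1
    simp [Pi.single_eq_of_ne (Finset.mem_erase.mp hk).1]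

lemma prod_sub_single {n : ℕ} (y : Fin n → ℂ) (j : Fin n) (β : Fin n → ℕ) :
    ∏ k, y k ^ ((β - Pi.single j 1 : Fin n → ℕ) k)
      = y j ^ (β j - 1) * ∏ k ∈ univ.erase j, y k ^ β k := by
  rw [show (∏ k, y k ^ ((β - Pi.single j 1 : Fin n → ℕ) k)) =
      (fun k => y k ^ ((β - Pi.single j 1 : Fin n → ℕ) k)) j *
        ∏ k ∈ univ.erase j, y k ^ ((β - Pi.single j 1 : Fin n → ℕ) k) from
    (Finset.mul_prod_erase univ _ (mem_univ j)).symm]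
  congr 1
  · congr 1; simp
  · refine Finset.prod_congr rfl fun k hk => ?_
    congr 1
    simp [Pi.single_eq_of_ne (Finset.mem_erase.mp hk).1]

lemma sum_slice_hasDerivAt {m n : ℕ} (a : (Fin m → ℝ) → (Fin n → ℕ) → ℂ)
    (F : Finset ((Fin m → ℝ) × (Fin n → ℕ))) (z : Fin m → ℂ) (y : Fin n → ℂ) (j : Fin n) :
    HasDerivAt (fun w : ℂ => ∑ q ∈ F, a q.1 q.2 * expMono q.1 z *
        ((y j + w) ^ (q.2 j) * ∏ k ∈ univ.erase j, y k ^ q.2 k))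
      (∑ q ∈ F, a q.1 q.2 * expMono q.1 z *
        ((q.2 j : ℂ) * y j ^ (q.2 j - 1) * ∏ k ∈ univ.erase j, y k ^ q.2 k)) 0 := by
  refine HasDerivAt.fun_sum fun q _ => ?_
  have h1 : HasDerivAt (fun w : ℂ => y j + w) 1 0 := by
    simpa using (hasDerivAt_id (0:ℂ)).const_add (y j)
  have h2 := ((h1.pow (q.2 j)).mul_const (∏ k ∈ univ.erase j, y k ^ q.2 k)).const_mul
    (a q.1 q.2 * expMono q.1 z)
  convert h2 using 1
  · rfl
  · rfl
  · simp

lemma sum_slice_differentiable {m n : ℕ} (a : (Fin m → ℝ) → (Fin n → ℕ) → ℂ)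
    (F : Finset ((Fin m → ℝ) × (Fin n → ℕ))) (z : Fin m → ℂ) (y : Fin n → ℂ) (j : Fin n) :
    Differentiable ℂ (fun w : ℂ => ∑ q ∈ F, a q.1 q.2 * expMono q.1 z *
        ((y j + w) ^ (q.2 j) * ∏ k ∈ univ.erase j, y k ^ q.2 k)) := by
  refine Differentiable.fun_sum fun q _ => ?_
  refine Differentiable.const_mul ?_ _
  exact ((differentiable_id.const_add (y j)).pow _).mul_const _

section Fsets
variable {m n : ℕ} (j : Fin n)

lemma sum_single_nat : (∑ k, (((Pi.single j 1 : Fin n → ℕ)) k : ℝ)) = 1 := by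
  have h : (∑ k, ((Pi.single j 1 : Fin n → ℕ)) k) = 1 := by
    rw [Finset.sum_pi_single']
    simp
  rw [← Nat.cast_sum, h, Nat.cast_one]

lemma sub_add_single {β : Fin n → ℕ} (hβ : β j ≠ 0) :
    (β - Pi.single j 1 : Fin n → ℕ) + Pi.single j 1 = β := by
  funext k
  by_cases hk : k = j
  · subst hk
    simp [Nat.sub_add_cancel (Nat.one_le_iff_ne_zero.mpr hβ)]
  · simp [Pi.single_eq_of_ne hk]

lemma add_sub_single (β : Fin n → ℕ) :
    (β + Pi.single j 1 : Fin n → ℕ) - Pi.single j 1 = β := by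
  funext k
  by_cases hk : k = j
  · subst hk; simp
  · simp [Pi.single_eq_of_ne hk]

lemma sum_sub_single {β : Fin n → ℕ} (hβ : β j ≠ 0) :
    (∑ k, (((β - Pi.single j 1 : Fin n → ℕ)) k : ℝ)) = (∑ k, (β k : ℝ)) - 1 := by
  have h : ∀ k, (((β - Pi.single j 1 : Fin n → ℕ)) k : ℝ)
      = (β k : ℝ) - (((Pi.single j 1 : Fin n → ℕ)) k : ℝ) := by
    intro k
    rw [Pi.sub_apply, Nat.cast_sub]
    by_cases hk : k = j
    · subst hk; simpa using Nat.one_le_iff_ne_zero.mpr hβ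
    · simp [Pi.single_eq_of_ne hk]
  rw [Finset.sum_congr rfl fun k _ => h k, Finset.sum_sub_distrib, sum_single_nat]

lemma sum_add_single (β : Fin n → ℕ) :
    (∑ k, (((β + Pi.single j 1 : Fin n → ℕ)) k : ℝ)) = (∑ k, (β k : ℝ)) + 1 := by
  have h : ∀ k, (((β + Pi.single j 1 : Fin n → ℕ)) k : ℝ)
      = (β k : ℝ) + (((Pi.single j 1 : Fin n → ℕ)) k : ℝ) := by
    intro k; rw [Pi.add_apply, Nat.cast_add]
  rw [Finset.sum_congr rfl fun k _ => h k, Finset.sum_add_distrib, sum_single_nat]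

variable {ν : ℝ} {a : (Fin m → ℝ) → (Fin n → ℕ) → ℂ} {F : Finset ((Fin m → ℝ) × (Fin n → ℕ))}

lemma memF'_iff
    (hF : ∀ q, q ∈ F ↔ a q.1 q.2 ≠ 0 ∧ (∑ i, q.1 i) + (∑ k, (q.2 k : ℝ)) ≤ ν + 1) :
    ∀ p : (Fin m → ℝ) × (Fin n → ℕ),
      p ∈ (F.filter fun q => q.2 j ≠ 0).image (fun q => (q.1, q.2 - Pi.single j 1)) ↔
      (((p.2 j + 1 : ℕ) : ℂ) * a p.1 (p.2 + Pi.single j 1) ≠ 0 ∧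
        (∑ i, p.1 i) + (∑ k, ((p.2 k : ℕ) : ℝ)) ≤ ν) := by
  intro p
  constructor
  · intro hp
    obtain ⟨q, hq, rfl⟩ := Finset.mem_image.mp hp
    obtain ⟨hqF, hqj⟩ := Finset.mem_filter.mp hq
    obtain ⟨hane, hwt⟩ := (hF q).mp hqF
    have hres : (q.2 - Pi.single j 1 : Fin n → ℕ) + Pi.single j 1 = q.2 := sub_add_single j hqj
    constructor
    · simp only [hres]
      exact mul_ne_zero (Nat.cast_ne_zero.mpr (Nat.succ_ne_zero _)) hane
    · simp only
      rw [sum_sub_single j hqj]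
      linarith
  · rintro ⟨hb, hwt⟩
    have hane : a p.1 (p.2 + Pi.single j 1) ≠ 0 := fun h => hb (by simp [h])
    refine Finset.mem_image.mpr ⟨(p.1, p.2 + Pi.single j 1), Finset.mem_filter.mpr ⟨?_, ?_⟩, ?_⟩
    · refine (hF _).mpr ⟨hane, ?_⟩
      simp only
      rw [sum_add_single j p.2]
      linarith
    · simp
    · exact Prod.ext rfl (add_sub_single j p.2)
end Fsets

lemma sumF'_eq {m n : ℕ} (j : Fin n) (a : (Fin m → ℝ) → (Fin n → ℕ) → ℂ)
    (F : Finset ((Fin m → ℝ) × (Fin n → ℕ))) (z : Fin m → ℂ) (y : Fin n → ℂ) :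
    (((F.filter fun q => q.2 j ≠ 0).image (fun q => (q.1, (q.2 - Pi.single j 1 : Fin n → ℕ)))).sum
      fun p => ((p.2 j + 1 : ℕ) : ℂ) * a p.1 (p.2 + Pi.single j 1) * expMono p.1 z
        * ∏ k, y k ^ p.2 k)
    = ∑ q ∈ F, a q.1 q.2 * expMono q.1 z *
        ((q.2 j : ℂ) * y j ^ (q.2 j - 1) * ∏ k ∈ univ.erase j, y k ^ q.2 k) := by
  have hinj : ∀ q ∈ F.filter fun q => q.2 j ≠ 0, ∀ q' ∈ F.filter fun q => q.2 j ≠ 0,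
      (fun q => (q.1, (q.2 - Pi.single j 1 : Fin n → ℕ))) q = (fun q => (q.1, (q.2 - Pi.single j 1 : Fin n → ℕ))) q'
        → q = q' := by
    intro q hq q' hq' h
    have hqj := (Finset.mem_filter.mp hq).2
    have hq'j := (Finset.mem_filter.mp hq').2
    simp only [Prod.mk.injEq] at h
    have h2 : q.2 = q'.2 := by
      have := congrArg (· + (Pi.single j 1 : Fin n → ℕ)) h.2
      simpa [sub_add_single j hqj, sub_add_single j hq'j] using this
    exact Prod.ext h.1 h2
  rw [Finset.sum_image hinj]
  rw [Finset.sum_congr rfl (fun q hq => ?_)]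
  · exact Finset.sum_filter_of_ne fun q _ h => by
      intro h0
      apply h
      rw [show ((q.2 j : ℂ)) = 0 by rw [h0, Nat.cast_zero]]
      ring
  · have hqj := (Finset.mem_filter.mp hq).2
    simp only
    rw [sub_add_single j hqj, prod_sub_single,
      show ((q.2 - Pi.single j 1 : Fin n → ℕ) j + 1 : ℕ) = q.2 j by
        simp [Nat.sub_add_cancel (Nat.one_le_iff_ne_zero.mpr hqj)]]
    ring

lemma isOpen_SQD (c C : ℝ) : IsOpen (SQD c C) := by
  have : SQD c C = {z : ℂ | z.re < Real.log c - C * Real.sqrt |z.im|} := rfl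
  rw [this]
  exact isOpen_lt Complex.continuous_re
    (continuous_const.sub (continuous_const.mul
      (Real.continuous_sqrt.comp (continuous_abs.comp Complex.continuous_im))))

lemma isOpen_QDom (c C : ℝ) (m : ℕ) : IsOpen (QDom c C m) := by
  have : QDom c C m = ⋂ i, (fun z : Fin m → ℂ => z i) ⁻¹' SQD c C := by
    ext z; simp [QDom, Set.mem_iInter]
  rw [this]
  exact isOpen_iInter_of_finite fun i => (isOpen_SQD c C).preimage (continuous_apply i)

lemma isOpen_PDisc (R : ℝ) (n : ℕ) : IsOpen (PDisc R n) := by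
  have : PDisc R n = ⋂ k, (fun y : Fin n → ℂ => y k) ⁻¹' Disc R := by
    ext y; simp [PDisc, Set.mem_iInter]
  rw [this]
  refine isOpen_iInter_of_finite fun k => IsOpen.preimage (continuous_apply k) ?_
  exact isOpen_lt continuous_norm continuous_const

/-- If `f` is holomorphic on `Ω(c,C)^m × D_R^n` with mixed asymptotic
expansion `a`, then `∂f/∂yⱼ` is holomorphic there with mixed asymptotic expansion
`(α,β) ↦ (βⱼ+1)·a(α,β+eⱼ)`. -/
theorem stmt6 (m n : ℕ) (c C R : ℝ) (hc : 0 < c) (hC : 0 < C) (hR : 0 < R)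
    (f : ((Fin m → ℂ) × (Fin n → ℂ)) → ℂ)
    (hf : DifferentiableOn ℂ f ((QDom c C m) ×ˢ (PDisc R n)))
    (a : (Fin m → ℝ) → (Fin n → ℕ) → ℂ) (ha : HasMixedAsymExp c C R f a) (j : Fin n) :
    DifferentiableOn ℂ (fun p => fderiv ℂ f p (0, Pi.single j 1))
      ((QDom c C m) ×ˢ (PDisc R n)) ∧
    HasMixedAsymExp c C R (fun p => fderiv ℂ f p (0, Pi.single j 1))
      (fun α β => ((β j + 1 : ℕ) : ℂ) * a α (β + Pi.single j 1)) := by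
  have hopen : IsOpen ((QDom c C m) ×ˢ (PDisc R n)) :=
    (isOpen_QDom c C m).prod (isOpen_PDisc R n)
  set v : (Fin m → ℂ) × (Fin n → ℂ) := ((0 : Fin m → ℂ), Pi.single j 1) with hvdef
  have hvnorm : ‖v‖ ≤ 1 := by
    rw [hvdef, Prod.norm_def]
    simp [Pi.norm_single]
  obtain ⟨haNat, haExp⟩ := ha
  constructor
  · exact fun p hp =>
      (differentiableAt_fderiv_apply hopen hf hvnorm hp).differentiableWithinAt
  constructor
  · constructor
    · intro α β hb i
      exact haNat.1 α (β + Pi.single j 1) (fun h => hb (by simp [h])) i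
    · intro i R₀ hR₀
      refine Set.Finite.subset (haNat.2 i R₀ hR₀) ?_
      rintro r ⟨⟨α, β, hb, hr⟩, hle⟩
      exact ⟨⟨α, β + Pi.single j 1, fun h => hb (by simp [h]), hr⟩, hle⟩
  · intro ν hν
    obtain ⟨c', C', R', hc', hC', hR', hR'le, hsub, F, hF, hEst⟩ := haExp (ν + 1) (by linarith)
    refine ⟨c', C', R' / 2, hc', hC', by linarith, by linarith, hsub,
      (F.filter fun q => q.2 j ≠ 0).image
        (fun q => (q.1, (q.2 - Pi.single j 1 : Fin n → ℕ))), memF'_iff j hF, ?_⟩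
    intro ε hε
    have h3pos : (0:ℝ) < (3:ℝ) ^ (ν + 1) := Real.rpow_pos_of_pos (by norm_num) _
    obtain ⟨δ₁, hδ₁, hB⟩ := hEst (ε / (3:ℝ) ^ (ν + 1)) (by positivity)
    have hminpos : 0 < min (δ₁ / 3) (R' / 4) := lt_min (by linarith) (by linarith)
    refine ⟨min (δ₁ / 3) (R' / 4), hminpos, ?_⟩
    intro z hz y hy hM
    have hzC : z ∈ QDom c C m := fun i => hsub (hz i)
    have hyk : ∀ k, ‖y k‖ < R' / 2 := hy
    have hyR : y ∈ PDisc R n := fun k => lt_of_lt_of_le (hyk k) (by linarith)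
    have hpmem : (z, y) ∈ QDom c C m ×ˢ PDisc R n := Set.mem_prod.mpr ⟨hzC, hyR⟩
    have hfd : DifferentiableAt ℂ f (z, y) := hf.differentiableAt (hopen.mem_nhds hpmem)
    have hMz0 : 0 ≤ mixedNorm z y := mixedNorm_nonneg z y
    set D : ℂ := ∑ q ∈ F, a q.1 q.2 * expMono q.1 z *
        ((q.2 j : ℂ) * y j ^ (q.2 j - 1) * ∏ k ∈ univ.erase j, y k ^ q.2 k) with hDdef
    set X : ℂ := fderiv ℂ f (z, y) v - D with hXdef
    have hslice : ∀ w : ℂ, (z, y) + w • v = (z, y + w • (Pi.single j 1 : Fin n → ℂ)) := by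
      intro w
      rw [hvdef, Prod.smul_mk, Prod.mk_add_mk, smul_zero, add_zero]
    have hfs : HasDerivAt (fun w : ℂ => f ((z, y) + w • v)) (fderiv ℂ f (z, y) v) 0 := by
      have h0 : DifferentiableAt ℂ f ((z, y) + (0:ℂ) • v) := by simpa using hfd
      have h1 := slice_hasDerivAt h0
      simpa using h1
    set P : ℂ → ℂ := fun w => ∑ q ∈ F, a q.1 q.2 * expMono q.1 z *
        ((y j + w) ^ q.2 j * ∏ k ∈ univ.erase j, y k ^ q.2 k) with hPdef
    have hP : HasDerivAt P D 0 := sum_slice_hasDerivAt a F z y j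
    have hPdiff : Differentiable ℂ P := sum_slice_differentiable a F z y j
    have hPS : ∀ w : ℂ, P w = ∑ q ∈ F, a q.1 q.2 * expMono q.1 z *
        ∏ k, ((y + w • (Pi.single j 1 : Fin n → ℂ)) k) ^ q.2 k := by
      intro w
      rw [hPdef]
      exact Finset.sum_congr rfl fun q _ => by rw [prod_shift y j w q.2]
    set H : ℂ → ℂ := fun w => f ((z, y) + w • v) - P w with hHdef
    have hH : HasDerivAt H X 0 := hfs.sub hP
    have core : ∀ ρ : ℝ, 0 < ρ → mixedNorm z y ≤ ρ → ρ < min (δ₁ / 3) (R' / 4) →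
        ‖X‖ ≤ ε / (3:ℝ) ^ (ν + 1) * ((3:ℝ) ^ (ν + 1) * ρ ^ ν) := by
      intro ρ hρ hMρ hρlt
      have hρδ : ρ < δ₁ / 3 := lt_of_lt_of_le hρlt (min_le_left _ _)
      have hρR : ρ < R' / 4 := lt_of_lt_of_le hρlt (min_le_right _ _)
      have hyj' : ∀ w : ℂ, ‖w‖ ≤ ρ → ‖y j + w‖ ≤ 2 * ρ := by
        intro w hw
        calc ‖y j + w‖ ≤ ‖y j‖ + ‖w‖ := norm_add_le _ _
          _ ≤ mixedNorm z y + ρ := add_le_add (norm_apply_le_mixedNorm z y j) hw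
          _ ≤ 2 * ρ := by linarith
      have hy' : ∀ w : ℂ, ‖w‖ ≤ ρ →
          y + w • (Pi.single j 1 : Fin n → ℂ) ∈ PDisc R' n := by
        intro w hw k
        by_cases hk : k = j
        · subst hk
          show ‖(y + w • (Pi.single k 1 : Fin n → ℂ)) k‖ < R'
          rw [show (y + w • (Pi.single k 1 : Fin n → ℂ)) k = y k + w by simp]
          calc ‖y k + w‖ ≤ 2 * ρ := hyj' w hw
            _ < R' := by linarith
        · show ‖(y + w • (Pi.single j 1 : Fin n → ℂ)) k‖ < R'
          rw [show (y + w • (Pi.single j 1 : Fin n → ℂ)) k = y k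
            by simp [Pi.single_eq_of_ne hk]]
          exact lt_of_lt_of_le (hyk k) (by linarith)
      have hy'' : ∀ w : ℂ, ‖w‖ ≤ ρ →
          (z, y + w • (Pi.single j 1 : Fin n → ℂ)) ∈ QDom c C m ×ˢ PDisc R n := by
        intro w hw
        refine Set.mem_prod.mpr ⟨hzC, fun k => ?_⟩
        have h1 : ‖(y + w • (Pi.single j 1 : Fin n → ℂ)) k‖ < R' := hy' w hw k
        show ‖(y + w • (Pi.single j 1 : Fin n → ℂ)) k‖ < R
        linarith
      have hHdiffOn : DifferentiableOn ℂ H (closure (ball (0:ℂ) ρ)) := by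
        rw [closure_ball _ hρ.ne']
        intro w hw
        rw [mem_closedBall_zero_iff] at hw
        have hfw : DifferentiableAt ℂ f ((z, y) + w • v) := by
          refine hf.differentiableAt (hopen.mem_nhds ?_)
          rw [hslice w]
          exact hy'' w hw
        exact ((slice_hasDerivAt hfw).differentiableAt.sub (hPdiff w)).differentiableWithinAt
      have hsb : ∀ w ∈ Metric.sphere (0:ℂ) ρ, ‖H w‖ ≤
          ε / (3:ℝ) ^ (ν + 1) * ((3 * ρ) ^ (ν + 1)) := by
        intro w hw
        rw [mem_sphere_zero_iff_norm] at hw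
        have hmix : mixedNorm z (y + w • (Pi.single j 1 : Fin n → ℂ)) ≤ 3 * ρ :=
          mixedNorm_shift_le z y j hMρ hw.le
        have hmixδ : mixedNorm z (y + w • (Pi.single j 1 : Fin n → ℂ)) < δ₁ :=
          lt_of_le_of_lt hmix (by linarith)
        have h1 := hB z hz (y + w • (Pi.single j 1 : Fin n → ℂ)) (hy' w hw.le) hmixδ
        have h2 : H w = f (z, y + w • (Pi.single j 1 : Fin n → ℂ)) -
            ∑ q ∈ F, a q.1 q.2 * expMono q.1 z *
              ∏ k, ((y + w • (Pi.single j 1 : Fin n → ℂ)) k) ^ q.2 k := by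
          rw [hHdef]
          simp only
          rw [hslice w, hPS w]
        rw [h2]
        refine h1.trans ?_
        have h4 : mixedNorm z (y + w • (Pi.single j 1 : Fin n → ℂ)) ^ (ν+1)
            ≤ (3 * ρ) ^ (ν+1) :=
          Real.rpow_le_rpow (mixedNorm_nonneg _ _) hmix (by linarith)
        have h5 : 0 ≤ ε / (3:ℝ) ^ (ν + 1) := by positivity
        exact mul_le_mul_of_nonneg_left h4 h5
      have hcb := Complex.norm_deriv_le_of_forall_mem_sphere_norm_le hρ
        (hHdiffOn.diffContOnCl) hsb
      rw [hH.deriv] at hcb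
      refine hcb.trans (le_of_eq ?_)
      rw [Real.mul_rpow (by norm_num) hρ.le, Real.rpow_add hρ ν 1, Real.rpow_one]
      field_simp
    have hεsimp : ∀ x : ℝ, ε / (3:ℝ) ^ (ν + 1) * ((3:ℝ) ^ (ν + 1) * x) = ε * x := by
      intro x
      field_simp
    have hXbound : ‖X‖ ≤ ε * mixedNorm z y ^ ν := by
      rcases eq_or_lt_of_le hMz0 with hMz | hMz
      · -- mixedNorm z y = 0
        have hX0 : ‖X‖ ≤ 0 := by
          by_contra hpos
          push_neg at hpos
          set t : ℝ := min (min (δ₁ / 3) (R' / 4) / 2) ((‖X‖ / (2 * ε)) ^ (ν⁻¹)) with htdef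
          have ht0 : 0 < t := lt_min (by linarith) (Real.rpow_pos_of_pos (by positivity) _)
          have htlt : t < min (δ₁ / 3) (R' / 4) :=
            lt_of_le_of_lt (min_le_left _ _) (by linarith)
          have hc := core t ht0 (by rw [← hMz]; exact ht0.le) htlt
          rw [hεsimp] at hc
          have h2 : ε * t ^ ν ≤ ε * ((‖X‖ / (2 * ε)) ^ (ν⁻¹)) ^ ν := by
            have := Real.rpow_le_rpow ht0.le (min_le_right
              (min (δ₁ / 3) (R' / 4) / 2) ((‖X‖ / (2 * ε)) ^ (ν⁻¹))) hν.le
            exact mul_le_mul_of_nonneg_left this hε.le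
          rw [Real.rpow_inv_rpow (by positivity) hν.ne'] at h2
          have h3 : ε * (‖X‖ / (2 * ε)) = ‖X‖ / 2 := by
            field_simp
          rw [h3] at h2
          linarith [hc.trans h2]
        calc ‖X‖ ≤ 0 := hX0
          _ ≤ ε * mixedNorm z y ^ ν := by positivity
      · have hc := core (mixedNorm z y) hMz le_rfl hM
        rw [hεsimp] at hc
        exact hc
    -- identify the goal with ‖X‖ ≤ ...
    have hgoal : (fun p => fderiv ℂ f p v) (z, y) -
        (((F.filter fun q => q.2 j ≠ 0).image
          (fun q => (q.1, (q.2 - Pi.single j 1 : Fin n → ℕ)))).sum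
          fun p => ((p.2 j + 1 : ℕ) : ℂ) * a p.1 (p.2 + Pi.single j 1) * expMono p.1 z
            * ∏ k, y k ^ p.2 k) = X := by
      rw [hXdef, hDdef]
      simp only
      rw [sumF'_eq j a F z y]
    calc ‖(fun p => fderiv ℂ f p v) (z, y) - _‖ = ‖X‖ := by rw [hgoal]
      _ ≤ ε * mixedNorm z y ^ ν := hXbound
end
end

section
/- Let S ⊆ [0,∞)^m × ℕ^n be a set such that for each i ≤ m and each R > 0 the set {αᵢ : (α,β) ∈ S} ∩ [0,R] is finite, let A, R > 0, and for each p ∈ ℕ^q let b_p be holomorphic on Ω(c,C)^m × D_R^n with mixed asymptotic expansion B_p satisfying supp B_p ⊆ S and |b_p(z,y)| ≤ A/R^{|p|} for all (z,y) ∈ Ω(c,C)^m × D_R^n. Then the series g(z,y,w) := Σ_{p ∈ ℕ^q} b_p(z,y)·w^p converges locally uniformly on Ω(c,C)^m × D_R^n × D_R^q, defines a holomorphic function there, and g has mixed asymptotic expansion (α,β,p) ↦ B_p(α,β). -/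
noncomputable section
open scoped Classical

/-- geometric series on a pi type -/
lemma hasSum_pigeom (q : ℕ) (t : Fin q → ℝ) (h0 : ∀ j, 0 ≤ t j) (h1 : ∀ j, t j < 1) :
    HasSum (fun p : Fin q → ℕ => ∏ j, t j ^ p j) (∏ j, (1 - t j)⁻¹) := by
  induction q with
  | zero =>
    have h := hasSum_single (f := fun p : Fin 0 → ℕ => ∏ j, t j ^ p j) (fun i => i.elim0)
      (fun b hb => absurd (funext fun i => i.elim0) hb)
    simpa using h
  | succ q ih =>
    rw [← (Fin.consEquiv fun _ : Fin (q+1) => ℕ).hasSum_iff]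
    have hg : HasSum (fun k : ℕ => t 0 ^ k) (1 - t 0)⁻¹ :=
      hasSum_geometric_of_lt_one (h0 0) (h1 0)
    have hih := ih (fun j => t j.succ) (fun j => h0 _) (fun j => h1 _)
    have hsum : Summable fun x : ℕ × (Fin q → ℕ) => t 0 ^ x.1 * ∏ j, t j.succ ^ x.2 j := by
      apply Summable.mul_of_nonneg hg.summable hih.summable
      · intro k; exact pow_nonneg (h0 0) k
      · intro p; exact Finset.prod_nonneg fun j _ => pow_nonneg (h0 _) _
    have hmul := hg.mul hih hsum
    have heq : ((fun p : Fin (q+1) → ℕ => ∏ j, t j ^ p j) ∘ (Fin.consEquiv fun _ : Fin (q+1) => ℕ))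
        = fun x : ℕ × (Fin q → ℕ) => t 0 ^ x.1 * ∏ j, t j.succ ^ x.2 j := by
      funext x
      simp [Fin.consEquiv, Fin.prod_univ_succ]
    rw [heq, Fin.prod_univ_succ]
    exact hmul

lemma SQD_mono {c1 C1 c2 C2 : ℝ} (hc1 : 0 < c1) (hc : c1 ≤ c2) (hC : C2 ≤ C1) :
    SQD c1 C1 ⊆ SQD c2 C2 := by
  intro z hz
  refine lt_of_lt_of_le hz (sub_le_sub (Real.log_le_log hc1 hc) ?_)
  exact mul_le_mul_of_nonneg_right hC (Real.sqrt_nonneg _)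

lemma finite_supp {m n : ℕ} (a : (Fin m → ℝ) → (Fin n → ℕ) → ℂ) (h : MixedNatural a) (ν : ℝ) :
    {x : (Fin m → ℝ) × (Fin n → ℕ) |
      a x.1 x.2 ≠ 0 ∧ ∑ i, x.1 i + ∑ j, (x.2 j : ℝ) ≤ ν}.Finite := by
  set ν' := max ν 1 with hν'
  have hν'0 : (0:ℝ) < ν' := lt_of_lt_of_le one_pos (le_max_right _ _)
  have hfin : ((Set.univ.pi fun i : Fin m =>
        {r : ℝ | (∃ α β, a α β ≠ 0 ∧ α i = r) ∧ r ≤ ν'}) ×ˢ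
      (Set.univ.pi fun _ : Fin n => Set.Iic ⌊ν'⌋₊)).Finite :=
    Set.Finite.prod (Set.Finite.pi fun i => h.2 i ν' hν'0)
      (Set.Finite.pi fun _ => Set.finite_Iic _)
  refine hfin.subset ?_
  rintro ⟨α, β⟩ ⟨ha, hw⟩
  have hw' : ∑ i, α i + ∑ j, (β j : ℝ) ≤ ν' := hw.trans (le_max_left _ _)
  have hβ0 : (0:ℝ) ≤ ∑ j, (β j : ℝ) := Finset.sum_nonneg fun j _ => Nat.cast_nonneg _
  have hα0 : ∀ i, 0 ≤ α i := h.1 α β ha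
  have hαs : (0:ℝ) ≤ ∑ i, α i := Finset.sum_nonneg fun i _ => hα0 i
  constructor
  · intro i _
    refine ⟨⟨α, β, ha, rfl⟩, ?_⟩
    calc α i ≤ ∑ i', α i' := Finset.single_le_sum (fun i' _ => hα0 i') (Finset.mem_univ i)
    _ ≤ ν' := by linarith
  · intro j _
    simp only [Set.mem_Iic]
    refine Nat.le_floor ?_
    calc (β j : ℝ) ≤ ∑ j', (β j' : ℝ) :=
        Finset.single_le_sum (f := fun j' => (β j' : ℝ)) (fun j' _ => Nat.cast_nonneg _)
          (Finset.mem_univ j)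
    _ ≤ ν' := by linarith

lemma schwarz_bound {E : Type*} [NormedAddCommGroup E] [NormedSpace ℂ E] {h : E → ℂ} {x : E}
    {ρ M : ℝ} (hρ : 0 < ρ) (hM : 0 < M) (hd : DifferentiableOn ℂ h (Metric.ball x ρ))
    (hb : ∀ v ∈ Metric.ball x ρ, ‖h v‖ ≤ M) (hx : DifferentiableAt ℂ h x) :
    ‖fderiv ℂ h x‖ ≤ 3 * M / ρ := by
  apply ContinuousLinearMap.opNorm_le_bound _ (by positivity)
  intro u
  rcases eq_or_ne u 0 with rfl | hu
  · simp
  have hu0 : (0:ℝ) < ‖u‖ := norm_pos_iff.mpr hu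
  set r1 := ρ / ‖u‖ with hr1
  have hr10 : 0 < r1 := div_pos hρ hu0
  set ψ : ℂ → E := fun t => x + t • u with hψ
  set φ : ℂ → ℂ := fun t => h (x + t • u) with hφ
  have hψd : ∀ t : ℂ, HasDerivAt ψ u t := by
    intro t
    have := ((hasDerivAt_id t).smul_const u).const_add x
    simpa only [id, one_smul] using this
  have hmaps : Set.MapsTo ψ (Metric.ball 0 r1) (Metric.ball x ρ) := by
    intro t ht
    simp only [Metric.mem_ball, dist_zero_right] at ht
    simp only [Metric.mem_ball, hψ]
    rw [dist_eq_norm]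
    simp only [add_sub_cancel_left, norm_smul]
    calc ‖t‖ * ‖u‖ < r1 * ‖u‖ := by gcongr
    _ = ρ := by rw [hr1, div_mul_cancel₀ _ hu0.ne']
  have hψdiff : Differentiable ℂ ψ := fun t => (hψd t).differentiableAt
  have hφd : DifferentiableOn ℂ φ (Metric.ball 0 r1) :=
    hd.comp hψdiff.differentiableOn hmaps
  have hφmaps : Set.MapsTo φ (Metric.ball 0 r1) (Metric.ball (φ 0) (3 * M)) := by
    intro t ht
    simp only [Metric.mem_ball]
    have h1 : ‖φ t‖ ≤ M := hb _ (hmaps ht)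
    have h2 : ‖φ 0‖ ≤ M := hb _ (hmaps (by simp [Metric.mem_ball, hr10]))
    calc dist (φ t) (φ 0) ≤ ‖φ t‖ + ‖φ 0‖ := dist_le_norm_add_norm _ _
    _ ≤ M + M := add_le_add h1 h2
    _ < 3 * M := by linarith
  have key := Complex.norm_deriv_le_div_of_mapsTo_ball hφd (hφmaps.mono_right Metric.ball_subset_closedBall) hr10
  have hder : HasDerivAt φ (fderiv ℂ h x u) 0 := by
    have h0 : ψ 0 = x := by simp [hψ]
    have hf : HasFDerivAt h (fderiv ℂ h x) (ψ 0) := by rw [h0]; exact hx.hasFDerivAt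
    have := hf.comp_hasDerivAt (0:ℂ) (hψd 0)
    exact this
  rw [hder.deriv] at key
  calc ‖fderiv ℂ h x u‖ ≤ 3 * M / r1 := key
  _ = 3 * M / ρ * ‖u‖ := by rw [hr1]; field_simp

lemma coord_le_mixedNorm {m n : ℕ} (z : Fin m → ℂ) (y : Fin n → ℂ) (j : Fin n) :
    ‖y j‖ ≤ mixedNorm z y := by
  rw [mixedNorm, show ‖y j‖ = Real.sqrt (‖y j‖ ^ 2) from (Real.sqrt_sq (norm_nonneg _)).symm]
  apply Real.sqrt_le_sqrt
  have h1 : ‖y j‖ ^ 2 ≤ ∑ j', ‖y j'‖ ^ 2 :=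
    Finset.single_le_sum (f := fun j' => ‖y j'‖ ^ 2) (fun j' _ => sq_nonneg _)
      (Finset.mem_univ j)
  have h2 : (0:ℝ) ≤ ∑ i, Real.exp ((z i).re) ^ 2 := Finset.sum_nonneg fun i _ => sq_nonneg _
  linarith

lemma mixedNorm_cast_le {m n q : ℕ} (z : Fin m → ℂ) (v : Fin (n+q) → ℂ) :
    mixedNorm z (fun i : Fin n => v (Fin.castAdd q i)) ≤ mixedNorm z v := by
  unfold mixedNorm
  apply Real.sqrt_le_sqrt
  rw [Fin.sum_univ_add (f := fun j => ‖v j‖ ^ 2)]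
  have : (0:ℝ) ≤ ∑ j : Fin q, ‖v (Fin.natAdd n j)‖ ^ 2 :=
    Finset.sum_nonneg fun j _ => sq_nonneg _
  linarith

lemma prod_differentiable {E : Type*} [NormedAddCommGroup E] [NormedSpace ℂ E]
    {ι : Type*} (s : Finset ι) (f : ι → E → ℂ) (h : ∀ i, Differentiable ℂ (f i)) :
    Differentiable ℂ (fun x => ∏ i ∈ s, f i x) := by
  classical
  induction s using Finset.induction with
  | empty => simpa using differentiable_const (1:ℂ)
  | insert _ _ hni ih =>
    simp only [Finset.prod_insert hni]
    exact (h _).mul ih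

set_option maxHeartbeats 4000000 in
/-- Summing up coefficient functions: if the `b_p` are holomorphic on
`Ω(c,C)^m × D_R^n` with mixed expansions `B_p` all supported in a fixed natural set `S` and
`|b_p| ≤ A/R^{|p|}`, then `g(z,y,w) = Σ_p b_p(z,y)·w^p` converges locally uniformly on
`Ω(c,C)^m × D_R^n × D_R^q`, is holomorphic there, and has mixed asymptotic expansion
`(α,β,p) ↦ B_p(α,β)`. -/
theorem stmt8 (m n q : ℕ) (c C R A : ℝ) (hc : 0 < c) (hC : 0 < C) (hR : 0 < R) (hA : 0 < A)
    (S : Set ((Fin m → ℝ) × (Fin n → ℕ)))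
    (hS0 : ∀ p ∈ S, ∀ i, 0 ≤ p.1 i)
    (hSnat : ∀ i : Fin m, ∀ r : ℝ, 0 < r → {t : ℝ | (∃ p ∈ S, p.1 i = t) ∧ t ≤ r}.Finite)
    (b : (Fin q → ℕ) → ((Fin m → ℂ) × (Fin n → ℂ)) → ℂ)
    (B : (Fin q → ℕ) → (Fin m → ℝ) → (Fin n → ℕ) → ℂ)
    (hbdiff : ∀ p, DifferentiableOn ℂ (b p) ((QDom c C m) ×ˢ (PDisc R n)))
    (hbexp : ∀ p, HasMixedAsymExp c C R (b p) (B p))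
    (hsupp : ∀ p α β, B p α β ≠ 0 → (α, β) ∈ S)
    (hbd : ∀ p, ∀ z ∈ QDom c C m, ∀ y ∈ PDisc R n, ‖b p (z, y)‖ ≤ A / R ^ (∑ j, p j)) :
    ∃ g : ((Fin m → ℂ) × (Fin (n + q) → ℂ)) → ℂ,
      (∀ z ∈ QDom c C m, ∀ y ∈ PDisc R n, ∀ w ∈ PDisc R q,
        HasSum (fun p : Fin q → ℕ => b p (z, y) * ∏ j, (w j) ^ (p j))
          (g (z, Fin.append y w))) ∧
      TendstoLocallyUniformlyOn
        (fun (F : Finset (Fin q → ℕ)) (x : (Fin m → ℂ) × (Fin (n + q) → ℂ)) =>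
          ∑ p ∈ F, b p (x.1, fun j : Fin n => x.2 (Fin.castAdd q j)) *
            ∏ j : Fin q, (x.2 (Fin.natAdd n j)) ^ (p j))
        g Filter.atTop ((QDom c C m) ×ˢ (PDisc R (n + q))) ∧
      DifferentiableOn ℂ g ((QDom c C m) ×ˢ (PDisc R (n + q))) ∧
      HasMixedAsymExp c C R g
        (fun α βp => B (fun j : Fin q => βp (Fin.natAdd n j)) α
          (fun i : Fin n => βp (Fin.castAdd q i))) := by
  classical
  set s : Set ((Fin m → ℂ) × (Fin (n + q) → ℂ)) := (QDom c C m) ×ˢ (PDisc R (n + q)) with hs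
  set T : (Fin q → ℕ) → ((Fin m → ℂ) × (Fin (n + q) → ℂ)) → ℂ := fun p x =>
    b p (x.1, fun j : Fin n => x.2 (Fin.castAdd q j)) *
      ∏ j : Fin q, (x.2 (Fin.natAdd n j)) ^ (p j) with hT
  -- openness
  have hSQDopen : IsOpen (SQD c C) := by
    apply isOpen_lt Complex.continuous_re
    exact continuous_const.sub (continuous_const.mul
      (Real.continuous_sqrt.comp (continuous_abs.comp Complex.continuous_im)))
  have hQopen : IsOpen (QDom c C m) := by
    have : QDom c C m = Set.pi Set.univ (fun _ : Fin m => SQD c C) := by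
      ext z; simp [QDom, Set.mem_pi]
    rw [this]
    exact isOpen_set_pi Set.finite_univ (fun _ _ => hSQDopen)
  have hPopen : IsOpen (PDisc R (n + q)) := by
    have : PDisc R (n + q) = Set.pi Set.univ (fun _ : Fin (n + q) => Disc R) := by
      ext y; simp [PDisc, Set.mem_pi]
    rw [this]
    exact isOpen_set_pi Set.finite_univ
      (fun _ _ => isOpen_lt continuous_norm continuous_const)
  have hsopen : IsOpen s := hQopen.prod hPopen
  have hmemπ : ∀ x ∈ s, (x.1, fun j : Fin n => x.2 (Fin.castAdd q j)) ∈
      (QDom c C m) ×ˢ (PDisc R n) := fun x hx => ⟨hx.1, fun j => hx.2 (Fin.castAdd q j)⟩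
  -- basic bound
  have hTbound : ∀ p, ∀ x ∈ s,
      ‖T p x‖ ≤ A * ∏ j, (‖x.2 (Fin.natAdd n j)‖ / R) ^ p j := by
    intro p x hx
    have h1 : ‖b p (x.1, fun j : Fin n => x.2 (Fin.castAdd q j))‖ ≤ A / R ^ (∑ j, p j) :=
      hbd p x.1 hx.1 _ (fun j => hx.2 (Fin.castAdd q j))
    have h2 : ‖T p x‖ = ‖b p (x.1, fun j : Fin n => x.2 (Fin.castAdd q j))‖ *
        ∏ j, ‖x.2 (Fin.natAdd n j)‖ ^ p j := by
      rw [hT]; rw [norm_mul, norm_prod]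
      simp [norm_pow]
    rw [h2]
    have h3 : ∏ j, ‖x.2 (Fin.natAdd n j)‖ ^ p j ≥ 0 :=
      Finset.prod_nonneg fun j _ => pow_nonneg (norm_nonneg _) _
    calc ‖b p (x.1, fun j : Fin n => x.2 (Fin.castAdd q j))‖ *
        ∏ j, ‖x.2 (Fin.natAdd n j)‖ ^ p j
        ≤ (A / R ^ (∑ j, p j)) * ∏ j, ‖x.2 (Fin.natAdd n j)‖ ^ p j :=
          mul_le_mul_of_nonneg_right h1 h3
      _ = A * ∏ j, (‖x.2 (Fin.natAdd n j)‖ / R) ^ p j := by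
          simp only [div_pow, Finset.prod_div_distrib, Finset.prod_pow_eq_pow_sum]
          field_simp
  have husum : ∀ (t : Fin q → ℝ), (∀ j, 0 ≤ t j) → (∀ j, t j < 1) →
      Summable (fun p : Fin q → ℕ => A * ∏ j, t j ^ p j) := by
    intro t h0 h1
    exact ((hasSum_pigeom q t h0 h1).summable).mul_left A
  have hTnormsummable : ∀ x ∈ s, Summable (fun p => ‖T p x‖) := by
    intro x hx
    apply Summable.of_nonneg_of_le (fun p => norm_nonneg _) (fun p => hTbound p x hx)
    apply husum
    · intro j; exact div_nonneg (norm_nonneg _) hR.le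
    · intro j; exact (div_lt_one hR).2 (hx.2 (Fin.natAdd n j))
  have hTsummable : ∀ x ∈ s, Summable (fun p => T p x) := by
    intro x hx
    exact Summable.of_norm (hTnormsummable x hx)
  refine ⟨fun x => ∑' p, T p x, ?_, ?_, ?_, ?_⟩
  · -- HasSum
    intro z hz y hy w hw
    have hx : (z, Fin.append y w) ∈ s := by
      refine ⟨hz, fun j => ?_⟩
      show Fin.append y w j ∈ Disc R
      refine Fin.addCases (fun i => ?_) (fun i => ?_) j
      · rw [Fin.append_left]; exact hy i
      · rw [Fin.append_right]; exact hw i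
    have heq : (fun p => T p (z, Fin.append y w)) =
        fun p => b p (z, y) * ∏ j, (w j) ^ (p j) := by
      funext p
      have h1 : (fun j : Fin n => Fin.append y w (Fin.castAdd q j)) = y :=
        funext fun j => Fin.append_left _ _ _
      have h2 : ∀ j : Fin q, Fin.append y w (Fin.natAdd n j) = w j :=
        fun j => Fin.append_right _ _ _
      simp only [hT, h1, h2]
    show HasSum (fun p => b p (z, y) * ∏ j, (w j) ^ (p j)) (∑' p, T p (z, Fin.append y w))
    rw [heq]
    have h := (hTsummable _ hx).hasSum
    rw [heq] at h
    exact h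
  · -- locally uniform convergence
    rw [tendstoLocallyUniformlyOn_iff_forall_isCompact hsopen]
    intro K hKs hK
    rcases K.eq_empty_or_nonempty with rfl | hne
    · exact tendstoUniformlyOn_empty
    obtain ⟨x₀, hx₀K, hmax⟩ := hK.exists_isMaxOn hne (continuous_snd.norm.continuousOn)
    set r := ‖x₀.2‖ with hr
    have hr0 : 0 ≤ r := norm_nonneg _
    have hrR : r < R := (pi_norm_lt_iff hR).2 (fun j => (hKs hx₀K).2 j)
    have hsum : Summable (fun p : Fin q → ℕ => A * ∏ j, (r / R) ^ p j) := by
      apply husum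
      · intro j; exact div_nonneg hr0 hR.le
      · intro j; exact (div_lt_one hR).2 hrR
    apply tendstoUniformlyOn_tsum hsum
    intro p x hxK
    refine (hTbound p x (hKs hxK)).trans ?_
    have hb1 : ∀ j : Fin q, ‖x.2 (Fin.natAdd n j)‖ ≤ r :=
      fun j => (norm_le_pi_norm x.2 (Fin.natAdd n j)).trans (hmax hxK)
    refine mul_le_mul_of_nonneg_left (Finset.prod_le_prod
      (fun j _ => pow_nonneg (div_nonneg (norm_nonneg _) hR.le) _)
      (fun j _ => pow_le_pow_left₀ (div_nonneg (norm_nonneg _) hR.le)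
        ((div_le_div_iff_of_pos_right hR).2 (hb1 j)) _)) hA.le
  · -- differentiability
    have hTdiff : ∀ p, DifferentiableOn ℂ (T p) s := by
      intro p
      have hπ : Differentiable ℂ (fun x : (Fin m → ℂ) × (Fin (n + q) → ℂ) =>
          (x.1, fun j : Fin n => x.2 (Fin.castAdd q j))) := by
        apply Differentiable.prodMk differentiable_fst
        apply differentiable_pi.mpr
        intro j
        fun_prop
      have h1 : DifferentiableOn ℂ
          (fun x : (Fin m → ℂ) × (Fin (n + q) → ℂ) =>
            b p (x.1, fun j : Fin n => x.2 (Fin.castAdd q j))) s :=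
        (hbdiff p).comp hπ.differentiableOn hmemπ
      have h2 : Differentiable ℂ (fun x : (Fin m → ℂ) × (Fin (n + q) → ℂ) =>
          ∏ j : Fin q, (x.2 (Fin.natAdd n j)) ^ (p j)) :=
        prod_differentiable _ _
          (fun j => by fun_prop)
      exact h1.mul h2.differentiableOn
    intro x₀ hx₀
    obtain ⟨r, hrpos, hball⟩ := Metric.isOpen_iff.1 hsopen x₀ hx₀
    have hx2R : ‖x₀.2‖ < R := (pi_norm_lt_iff hR).2 (fun j => hx₀.2 j)
    set ρ := min (r / 3) ((R - ‖x₀.2‖) / 4) with hρdef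
    have hρ0 : 0 < ρ := lt_min (by linarith) (by linarith)
    set r' := ‖x₀.2‖ + 2 * ρ with hr'def
    have hx₀2 : (0:ℝ) ≤ ‖x₀.2‖ := norm_nonneg _
    have hr'0 : 0 < r' := by simp only [hr'def]; linarith
    have hr'R : r' < R := by
      have h := min_le_right (r / 3) ((R - ‖x₀.2‖) / 4)
      simp only [hr'def]
      have : ρ ≤ (R - ‖x₀.2‖) / 4 := h
      linarith
    have hball2 : Metric.ball x₀ (2 * ρ) ⊆ s := by
      refine Set.Subset.trans (Metric.ball_subset_ball ?_) hball
      have h := min_le_left (r / 3) ((R - ‖x₀.2‖) / 4)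
      have : ρ ≤ r / 3 := h
      linarith
    set M : (Fin q → ℕ) → ℝ := fun p => A * ∏ j, (r' / R) ^ p j with hM
    have hM0 : ∀ p, 0 < M p :=
      fun p => mul_pos hA (Finset.prod_pos fun j _ => pow_pos (div_pos hr'0 hR) _)
    have hMb : ∀ p, ∀ x ∈ Metric.ball x₀ (2 * ρ), ‖T p x‖ ≤ M p := by
      intro p x hx
      refine (hTbound p x (hball2 hx)).trans ?_
      have hx2 : ∀ j : Fin q, ‖x.2 (Fin.natAdd n j)‖ ≤ r' := by
        intro j
        have h1 : ‖x.2 (Fin.natAdd n j)‖ ≤ ‖x.2‖ := norm_le_pi_norm _ _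
        have h2 : ‖x.2‖ ≤ ‖x₀.2‖ + dist x.2 x₀.2 := by
          rw [dist_eq_norm]
          have := norm_sub_norm_le x.2 x₀.2
          linarith
        have h3 : dist x.2 x₀.2 ≤ dist x x₀ := by
          rw [Prod.dist_eq]; exact le_max_right _ _
        have h4 : dist x x₀ < 2 * ρ := Metric.mem_ball.1 hx
        simp only [hr'def]
        linarith
      rw [hM]
      refine mul_le_mul_of_nonneg_left (Finset.prod_le_prod
        (fun j _ => pow_nonneg (div_nonneg (norm_nonneg _) hR.le) _)
        (fun j _ => pow_le_pow_left₀ (div_nonneg (norm_nonneg _) hR.le)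
          ((div_le_div_iff_of_pos_right hR).2 (hx2 j)) _)) hA.le
    have hMsum : Summable M := by
      apply husum
      · intro j; exact div_nonneg hr'0.le hR.le
      · intro j; exact (div_lt_one hR).2 hr'R
    have hballsub : Metric.ball x₀ ρ ⊆ Metric.ball x₀ (2 * ρ) :=
      Metric.ball_subset_ball (by linarith)
    have hDbound : ∀ p, ∀ x ∈ Metric.ball x₀ ρ, ‖fderiv ℂ (T p) x‖ ≤ 3 * M p / ρ := by
      intro p x hx
      have hsub : Metric.ball x ρ ⊆ Metric.ball x₀ (2 * ρ) := by
        apply Metric.ball_subset_ball'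
        have := Metric.mem_ball.1 hx
        linarith
      refine schwarz_bound hρ0 (hM0 p) ((hTdiff p).mono (hsub.trans hball2))
        (fun v hv => hMb p v (hsub hv)) ?_
      exact (hTdiff p).differentiableAt (hsopen.mem_nhds (hball2 (hballsub hx)))
    have hDsum : Summable (fun p => 3 * M p / ρ) := (hMsum.mul_left 3).div_const ρ
    have key := hasFDerivAt_of_tendstoUniformlyOn Metric.isOpen_ball
      (tendstoUniformlyOn_tsum hDsum (fun p x hx => hDbound p x hx))
      (fun F x hx => HasFDerivAt.sum (fun p _ =>
        ((hTdiff p).differentiableAt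
          (hsopen.mem_nhds (hball2 (hballsub hx)))).hasFDerivAt))
      (fun x hx => by simp only [Finset.sum_apply]; exact (hTsummable x (hball2 (hballsub hx))).hasSum)
      (Metric.mem_ball_self hρ0)
    exact key.differentiableAt.differentiableWithinAt
  · -- asymptotic expansion
    have hMNa : MixedNatural (fun (α : Fin m → ℝ) (βp : Fin (n+q) → ℕ) =>
        B (fun j : Fin q => βp (Fin.natAdd n j)) α (fun i : Fin n => βp (Fin.castAdd q i))) := by
      constructor
      · intro α βp h i
        exact hS0 _ (hsupp _ _ _ h) i
      · intro i r hr
        refine (hSnat i r hr).subset ?_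
        rintro t ⟨⟨α, βp, h, rfl⟩, ht⟩
        exact ⟨⟨(α, fun i' => βp (Fin.castAdd q i')), hsupp _ _ _ h, rfl⟩, ht⟩
    refine ⟨hMNa, ?_⟩
    intro ν hν
    set K := ⌊ν⌋₊ + 1 with hKdef
    have hνK : ν < K := by
      have := Nat.lt_floor_add_one ν
      rw [hKdef]; push_cast
      push_cast at this
      linarith
    set P : Finset (Fin q → ℕ) :=
      (Fintype.piFinset fun _ => Finset.range (⌊ν⌋₊ + 1)).filter
        (fun p => ∑ j, p j ≤ ⌊ν⌋₊) with hPdef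
    have hPmem : ∀ p : Fin q → ℕ, p ∈ P ↔ ∑ j, p j ≤ ⌊ν⌋₊ := by
      intro p
      simp only [hPdef, Finset.mem_filter, Fintype.mem_piFinset, Finset.mem_range]
      constructor
      · exact fun h => h.2
      · intro h
        refine ⟨fun j => lt_of_le_of_lt (le_trans ?_ h) (Nat.lt_succ_self _), h⟩
        exact Finset.single_le_sum (f := fun j => p j) (fun _ _ => Nat.zero_le _)
          (Finset.mem_univ j)
    have hPne : P.Nonempty := ⟨fun _ => 0, by simp [hPmem]⟩
    have hsum_cast : ∀ p : Fin q → ℕ, (∑ j, (p j : ℝ)) = ((∑ j, p j : ℕ) : ℝ) := by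
      intro p; push_cast; ring
    -- choose levels μ p
    have hμex : ∀ p : Fin q → ℕ, ∃ μ : ℝ, max (ν - ∑ j, (p j : ℝ)) 0 < μ ∧
        μ ≤ max (ν - ∑ j, (p j : ℝ)) 0 + 1 ∧
        ∀ x : (Fin m → ℝ) × (Fin n → ℕ), B p x.1 x.2 ≠ 0 →
          ∑ i, x.1 i + ∑ j, (x.2 j : ℝ) ≤ μ →
          ∑ i, x.1 i + ∑ j, (x.2 j : ℝ) ≤ max (ν - ∑ j, (p j : ℝ)) 0 := by
      intro p
      set ν0 := max (ν - ∑ j, (p j : ℝ)) 0 with hν0def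
      have hν00 : 0 ≤ ν0 := le_max_right _ _
      have hWfin : (((fun x : (Fin m → ℝ) × (Fin n → ℕ) =>
          ∑ i, x.1 i + ∑ j, (x.2 j : ℝ)) ''
          {x | B p x.1 x.2 ≠ 0 ∧ ∑ i, x.1 i + ∑ j, (x.2 j : ℝ) ≤ ν0 + 1}) ∩
          Set.Ioc ν0 (ν0 + 1)).Finite :=
        (((finite_supp (B p) (hbexp p).1 (ν0 + 1)).image _).inter_of_left _)
      rcases Set.eq_empty_or_nonempty ((fun x : (Fin m → ℝ) × (Fin n → ℕ) =>
          ∑ i, x.1 i + ∑ j, (x.2 j : ℝ)) ''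
          {x | B p x.1 x.2 ≠ 0 ∧ ∑ i, x.1 i + ∑ j, (x.2 j : ℝ) ≤ ν0 + 1} ∩
          Set.Ioc ν0 (ν0 + 1)) with hemp | hne
      · refine ⟨ν0 + 1, by linarith, le_refl _, ?_⟩
        intro x hx hle
        by_contra hgt
        push_neg at hgt
        have hmem : (∑ i, x.1 i + ∑ j, (x.2 j : ℝ)) ∈
            ((fun x : (Fin m → ℝ) × (Fin n → ℕ) => ∑ i, x.1 i + ∑ j, (x.2 j : ℝ)) ''
            {x | B p x.1 x.2 ≠ 0 ∧ ∑ i, x.1 i + ∑ j, (x.2 j : ℝ) ≤ ν0 + 1} ∩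
            Set.Ioc ν0 (ν0 + 1)) := ⟨⟨x, ⟨hx, hle⟩, rfl⟩, hgt, hle⟩
        rw [hemp] at hmem
        exact hmem
      · obtain ⟨w0, hw0mem, hw0min⟩ := Set.exists_min_image _ id hWfin hne
        simp only [id] at hw0min
        have hw0gt : ν0 < w0 := hw0mem.2.1
        have hw0le : w0 ≤ ν0 + 1 := hw0mem.2.2
        refine ⟨(ν0 + w0) / 2, by linarith, by linarith, ?_⟩
        intro x hx hle
        by_contra hgt
        push_neg at hgt
        have hmem : (∑ i, x.1 i + ∑ j, (x.2 j : ℝ)) ∈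
            ((fun x : (Fin m → ℝ) × (Fin n → ℕ) => ∑ i, x.1 i + ∑ j, (x.2 j : ℝ)) ''
            {x | B p x.1 x.2 ≠ 0 ∧ ∑ i, x.1 i + ∑ j, (x.2 j : ℝ) ≤ ν0 + 1} ∩
            Set.Ioc ν0 (ν0 + 1)) := ⟨⟨x, ⟨hx, by linarith⟩, rfl⟩, hgt, by linarith⟩
        have := hw0min _ hmem
        linarith
    choose μ hμgt hμle hμprop using hμex
    have hμpos : ∀ p, 0 < μ p := fun p => lt_of_le_of_lt (le_max_right _ _) (hμgt p)
    choose cp Cp Rp hcp hCp hRp hRpR hsubp Fp hFpmem hFpest using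
      fun p => (hbexp p).2 (μ p) (hμpos p)
    set c' := min c (P.inf' hPne cp) with hc'def
    set C' := max C (P.sup' hPne Cp) with hC'def
    set R' := min R (P.inf' hPne Rp) with hR'def
    have hc'0 : 0 < c' := lt_min hc ((Finset.lt_inf'_iff hPne).2 fun p _ => hcp p)
    have hC'0 : 0 < C' := lt_of_lt_of_le hC (le_max_left _ _)
    have hR'0 : 0 < R' := lt_min hR ((Finset.lt_inf'_iff hPne).2 fun p _ => hRp p)
    have hR'R : R' ≤ R := min_le_left _ _
    have hsubcc : SQD c' C' ⊆ SQD c C := SQD_mono hc'0 (min_le_left _ _) (le_max_left _ _)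
    have hsubp' : ∀ p ∈ P, SQD c' C' ⊆ SQD (cp p) (Cp p) := fun p hp =>
      SQD_mono hc'0 ((min_le_right _ _).trans (Finset.inf'_le _ hp))
        ((Finset.le_sup' Cp hp).trans (le_max_right _ _))
    have hfinF := finite_supp (fun (α : Fin m → ℝ) (βp : Fin (n+q) → ℕ) =>
        B (fun j : Fin q => βp (Fin.natAdd n j)) α (fun i : Fin n => βp (Fin.castAdd q i)))
      hMNa ν
    refine ⟨c', C', R', hc'0, hC'0, hR'0, hR'R, hsubcc, hfinF.toFinset, ?_, ?_⟩
    · intro x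
      simpa using hfinF.mem_toFinset
    -- the grouping identity
    have hFsum : ∀ (z : Fin m → ℂ) (v : Fin (n+q) → ℂ),
        (∑ x ∈ hfinF.toFinset,
          B (fun j : Fin q => x.2 (Fin.natAdd n j)) x.1 (fun i : Fin n => x.2 (Fin.castAdd q i)) *
            expMono x.1 z * ∏ j, v j ^ x.2 j)
        = ∑ p ∈ P, (∑ t ∈ Fp p, B p t.1 t.2 * expMono t.1 z *
            ∏ i : Fin n, (v (Fin.castAdd q i)) ^ t.2 i) *
            ∏ j : Fin q, (v (Fin.natAdd n j)) ^ p j := by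
      intro z v
      have step1 : (∑ x ∈ hfinF.toFinset,
          B (fun j : Fin q => x.2 (Fin.natAdd n j)) x.1 (fun i : Fin n => x.2 (Fin.castAdd q i)) *
            expMono x.1 z * ∏ j, v j ^ x.2 j)
          = ∑ x ∈ P.sigma Fp, B x.1 x.2.1 x.2.2 * expMono x.2.1 z *
              (∏ i : Fin n, (v (Fin.castAdd q i)) ^ x.2.2 i) *
              ∏ j : Fin q, (v (Fin.natAdd n j)) ^ x.1 j := by
        refine Finset.sum_nbij'
          (i := fun x => (⟨fun j => x.2 (Fin.natAdd n j), (x.1, fun i => x.2 (Fin.castAdd q i))⟩ :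
            Σ _ : Fin q → ℕ, (Fin m → ℝ) × (Fin n → ℕ)))
          (j := fun x => (x.2.1, Fin.append x.2.2 x.1)) ?_ ?_ ?_ ?_ ?_
        · -- maps into sigma
          intro x hx
          rw [Set.Finite.mem_toFinset] at hx
          obtain ⟨hne0, hwt⟩ := hx
          have hα0 : ∀ i', 0 ≤ x.1 i' := hMNa.1 _ _ hne0
          have hαs : (0:ℝ) ≤ ∑ i, x.1 i := Finset.sum_nonneg fun i _ => hα0 i
          have hsplit : ∑ j, (x.2 j : ℝ) =
              ∑ i : Fin n, ((x.2 (Fin.castAdd q i) : ℕ) : ℝ) +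
              ∑ j : Fin q, ((x.2 (Fin.natAdd n j) : ℕ) : ℝ) :=
            Fin.sum_univ_add (f := fun j => ((x.2 j : ℕ) : ℝ))
          have hcast0 : (0:ℝ) ≤ ∑ i : Fin n, ((x.2 (Fin.castAdd q i) : ℕ) : ℝ) :=
            Finset.sum_nonneg fun i _ => Nat.cast_nonneg _
          rw [Finset.mem_sigma]
          constructor
          · rw [hPmem]
            refine Nat.le_floor ?_
            rw [← hsum_cast]
            rw [hsplit] at hwt
            linarith
          · rw [hFpmem]
            refine ⟨hne0, ?_⟩
            have hle : ∑ i, x.1 i + ∑ i : Fin n, ((x.2 (Fin.castAdd q i) : ℕ) : ℝ) ≤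
                ν - ∑ j : Fin q, ((x.2 (Fin.natAdd n j) : ℕ) : ℝ) := by
              rw [hsplit] at hwt
              linarith
            refine le_trans (le_trans hle ?_) (hμgt _).le
            exact le_max_left _ _
        · -- maps back
          intro x hx
          rw [Finset.mem_sigma] at hx
          obtain ⟨hxP, hxF⟩ := hx
          rw [hFpmem] at hxF
          obtain ⟨hB, hwt⟩ := hxF
          have happ1 : (fun j : Fin q => Fin.append x.2.2 x.1 (Fin.natAdd n j)) = x.1 :=
            funext fun j => Fin.append_right _ _ _
          have happ2 : (fun i : Fin n => Fin.append x.2.2 x.1 (Fin.castAdd q i)) = x.2.2 :=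
            funext fun i => Fin.append_left _ _ _
          rw [Set.Finite.mem_toFinset]
          constructor
          · show B (fun j : Fin q => Fin.append x.2.2 x.1 (Fin.natAdd n j)) x.2.1
              (fun i : Fin n => Fin.append x.2.2 x.1 (Fin.castAdd q i)) ≠ 0
            rw [happ1, happ2]; exact hB
          · show ∑ i, x.2.1 i + ∑ j, ((Fin.append x.2.2 x.1 j : ℕ) : ℝ) ≤ ν
            rw [Fin.sum_univ_add (f := fun j => ((Fin.append x.2.2 x.1 j : ℕ) : ℝ))]
            simp only [Fin.append_left, Fin.append_right]
            have h2 : (∑ j, (x.1 j : ℝ)) ≤ ν := by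
              rw [hsum_cast]
              calc ((∑ j, x.1 j : ℕ) : ℝ) ≤ (⌊ν⌋₊ : ℝ) := by
                    exact_mod_cast (hPmem _).1 hxP
                _ ≤ ν := Nat.floor_le hν.le
            have h1 := hμprop x.1 _ hB hwt
            rw [max_eq_left (by linarith)] at h1
            linarith
        · -- left inverse
          intro x hx
          refine Prod.ext rfl ?_
          funext j
          refine Fin.addCases (fun i => ?_) (fun i => ?_) j
          · exact Fin.append_left _ _ _
          · exact Fin.append_right _ _ _
        · -- right inverse
          rintro ⟨p, t⟩ hx
          have h1 : (fun j : Fin q => Fin.append t.2 p (Fin.natAdd n j)) = p :=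
            funext fun j => Fin.append_right _ _ _
          have h2 : (fun i : Fin n => Fin.append t.2 p (Fin.castAdd q i)) = t.2 :=
            funext fun i => Fin.append_left _ _ _
          show (⟨fun j : Fin q => Fin.append t.2 p (Fin.natAdd n j),
            (t.1, fun i : Fin n => Fin.append t.2 p (Fin.castAdd q i))⟩ :
            Σ _ : Fin q → ℕ, (Fin m → ℝ) × (Fin n → ℕ)) = ⟨p, t⟩
          rw [h1, h2]
        · -- values agree
          intro x hx
          rw [Fin.prod_univ_add (f := fun j => v j ^ x.2 j)]
          ring
      rw [step1, Finset.sum_sigma]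
      refine Finset.sum_congr rfl fun p hp => ?_
      rw [Finset.sum_mul]
    intro ε hε
    set ε₁ := ε / (2 * (P.card + 1)) with hε₁def
    have hε₁ : 0 < ε₁ := by positivity
    choose δp hδp0 hδpest using fun p => hFpest p ε₁ hε₁
    set cK := A * 2 ^ (K + q) / R ^ K with hcKdef
    have hcK0 : 0 < cK := by positivity
    have hKν : 0 < (K : ℝ) - ν := by linarith
    set d := (ε / (2 * cK)) ^ ((K : ℝ) - ν)⁻¹ with hddef
    have hd0 : 0 < d := Real.rpow_pos_of_pos (by positivity) _
    set δ := min (min (P.inf' hPne δp) 1) (min (R / 2) d) with hδdef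
    have hδ0 : 0 < δ := lt_min
      (lt_min ((Finset.lt_inf'_iff hPne).2 fun p _ => hδp0 p) one_pos)
      (lt_min (by positivity) hd0)
    refine ⟨δ, hδ0, ?_⟩
    intro z hz v hv hNδ
    simp only []
    rw [hFsum z v]
    set N := mixedNorm z v with hNdef
    have hN0 : 0 ≤ N := Real.sqrt_nonneg _
    have hNmnN : mixedNorm z (fun i => v (Fin.castAdd q i)) ≤ N := mixedNorm_cast_le z v
    have hNmn0 : 0 ≤ mixedNorm z (fun i => v (Fin.castAdd q i)) := Real.sqrt_nonneg _
    have hN1 : N ≤ 1 := (hNδ.trans_le ((min_le_left _ _).trans (min_le_right _ _))).le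
    have hNR2 : N ≤ R / 2 := (hNδ.trans_le ((min_le_right _ _).trans (min_le_left _ _))).le
    have hNd : N ≤ d := (hNδ.trans_le ((min_le_right _ _).trans (min_le_right _ _))).le
    have hNδp : ∀ p ∈ P, N < δp p := fun p hp => hNδ.trans_le
      (((min_le_left _ _).trans (min_le_left _ _)).trans (Finset.inf'_le _ hp))
    have hwN : ∀ j : Fin q, ‖v (Fin.natAdd n j)‖ ≤ N := fun j => coord_le_mixedNorm z v _
    have hzQ : z ∈ QDom c C m := fun i => hsubcc (hz i)
    have hvP : v ∈ PDisc R (n + q) := fun j => lt_of_lt_of_le (hv j) hR'R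
    have hxs : (z, v) ∈ s := ⟨hzQ, hvP⟩
    have hsummab := hTsummable _ hxs
    have hnormsum := hTnormsummable _ hxs
    set Sp : (Fin q → ℕ) → ℂ := fun p => ∑ t ∈ Fp p, B p t.1 t.2 * expMono t.1 z *
        ∏ i : Fin n, (v (Fin.castAdd q i)) ^ t.2 i with hSpdef
    have hgsplit : (∑' p, T p (z, v)) = ∑ p ∈ P, T p (z, v) +
        ∑' p : ↥((↑P : Set (Fin q → ℕ))ᶜ), T (↑p) (z, v) := (Summable.sum_add_tsum_compl (s := P) hsummab).symm
    have herr : (∑' p, T p (z, v)) -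
        ∑ p ∈ P, Sp p * ∏ j : Fin q, (v (Fin.natAdd n j)) ^ p j
        = (∑ p ∈ P, (T p (z, v) - Sp p * ∏ j : Fin q, (v (Fin.natAdd n j)) ^ p j)) +
          ∑' p : ↥((↑P : Set (Fin q → ℕ))ᶜ), T (↑p) (z, v) := by
      rw [hgsplit, Finset.sum_sub_distrib]
      ring
    have hbp : ∀ p ∈ P, ‖b p (z, fun i => v (Fin.castAdd q i)) - Sp p‖ ≤
        ε₁ * mixedNorm z (fun i => v (Fin.castAdd q i)) ^ μ p := by
      intro p hp
      refine hδpest p z (fun i => hsubp' p hp (hz i)) _ (fun i => ?_) ?_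
      · show ‖v (Fin.castAdd q i)‖ < Rp p
        exact lt_of_lt_of_le (hv (Fin.castAdd q i))
          ((min_le_right _ _).trans (Finset.inf'_le _ hp))
      · exact lt_of_le_of_lt hNmnN (hNδp p hp)
    have hterm : ∀ p ∈ P,
        ‖T p (z, v) - Sp p * ∏ j : Fin q, (v (Fin.natAdd n j)) ^ p j‖ ≤ ε₁ * N ^ ν := by
      intro p hp
      have hTval : T p (z, v) = b p (z, fun i => v (Fin.castAdd q i)) *
          ∏ j : Fin q, (v (Fin.natAdd n j)) ^ p j := rfl
      rw [hTval, ← sub_mul, norm_mul, norm_prod]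
      simp only [norm_pow]
      have hprod0 : (0:ℝ) ≤ ∏ j, ‖v (Fin.natAdd n j)‖ ^ p j :=
        Finset.prod_nonneg fun j _ => pow_nonneg (norm_nonneg _) _
      refine le_trans (mul_le_mul_of_nonneg_right (hbp p hp) hprod0) ?_
      rcases eq_or_lt_of_le hN0 with hNeq | hNpos
      · have hNmn : mixedNorm z (fun i => v (Fin.castAdd q i)) = 0 :=
          le_antisymm (hNmnN.trans hNeq.symm.le) hNmn0
        rw [hNmn, ← hNeq, Real.zero_rpow (ne_of_gt (hμpos p)),
          Real.zero_rpow (ne_of_gt hν)]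
        simp
      · have e1 : mixedNorm z (fun i => v (Fin.castAdd q i)) ^ μ p ≤ N ^ μ p :=
          Real.rpow_le_rpow hNmn0 hNmnN (hμpos p).le
        have e2 : (∏ j, ‖v (Fin.natAdd n j)‖ ^ p j) ≤ N ^ (∑ j, p j) := by
          rw [← Finset.prod_pow_eq_pow_sum]
          exact Finset.prod_le_prod (fun j _ => pow_nonneg (norm_nonneg _) _)
            (fun j _ => pow_le_pow_left₀ (norm_nonneg _) (hwN j) _)
        calc (ε₁ * mixedNorm z (fun i => v (Fin.castAdd q i)) ^ μ p) *
              ∏ j, ‖v (Fin.natAdd n j)‖ ^ p j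
            ≤ (ε₁ * N ^ μ p) * N ^ (∑ j, p j) := by
              exact mul_le_mul (mul_le_mul_of_nonneg_left e1 hε₁.le) e2 hprod0
                (mul_nonneg hε₁.le (Real.rpow_nonneg hN0 _))
          _ = ε₁ * N ^ (μ p + ∑ j, (p j : ℝ)) := by
              rw [mul_assoc, ← Real.rpow_natCast N (∑ j, p j), ← Real.rpow_add hNpos,
                hsum_cast]
          _ ≤ ε₁ * N ^ ν := by
              refine mul_le_mul_of_nonneg_left
                (Real.rpow_le_rpow_of_exponent_ge hNpos hN1 ?_) hε₁.le
              have h1 := hμgt p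
              have h2 : ν - ∑ j, (p j : ℝ) ≤ max (ν - ∑ j, (p j : ℝ)) 0 := le_max_left _ _
              linarith
    have hKle : ∀ p : Fin q → ℕ, p ∉ P → K ≤ ∑ j, p j := by
      intro p hp
      by_contra hlt
      push_neg at hlt
      exact hp ((hPmem p).2 (Nat.lt_succ_iff.1 hlt))
    have hhalf : Summable (fun p : Fin q → ℕ => ((1:ℝ)/2) ^ (∑ j, p j)) := by
      have h := (hasSum_pigeom q (fun _ => 1/2) (fun _ => by norm_num)
        (fun _ => by norm_num)).summable
      simpa [Finset.prod_pow_eq_pow_sum] using h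
    have hhalf_tsum : (∑' p : Fin q → ℕ, ((1:ℝ)/2) ^ (∑ j, p j)) ≤ 2 ^ q := by
      have h := (hasSum_pigeom q (fun _ => 1/2) (fun _ => by norm_num)
        (fun _ => by norm_num)).tsum_eq
      rw [show (fun p : Fin q → ℕ => ((1:ℝ)/2) ^ (∑ j, p j)) =
        fun p : Fin q → ℕ => ∏ j, ((fun _ : Fin q => (1:ℝ)/2) j) ^ p j from
        funext fun p => (Finset.prod_pow_eq_pow_sum _ _ _).symm]
      rw [h]
      have : ((1:ℝ) - 1/2)⁻¹ = 2 := by norm_num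
      simp only [this, Finset.prod_const, Finset.card_univ, Fintype.card_fin]
      exact le_refl _
    have htailbound : ∀ p : Fin q → ℕ, p ∉ P →
        ‖T p (z, v)‖ ≤ (A * 2 ^ K / R ^ K * N ^ K) * ((1:ℝ)/2) ^ (∑ j, p j) := by
      intro p hp
      have hK := hKle p hp
      have t1 : ‖T p (z, v)‖ ≤ A * (N / R) ^ (∑ j, p j) := by
        refine (hTbound p _ hxs).trans ?_
        rw [← Finset.prod_pow_eq_pow_sum]
        refine mul_le_mul_of_nonneg_left (Finset.prod_le_prod
          (fun j _ => pow_nonneg (div_nonneg (norm_nonneg _) hR.le) _)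
          (fun j _ => pow_le_pow_left₀ (div_nonneg (norm_nonneg _) hR.le)
            ((div_le_div_iff_of_pos_right hR).2 (hwN j)) _)) hA.le
      have ht0 : 0 ≤ N / R := div_nonneg hN0 hR.le
      have ht2 : N / R ≤ 1 / 2 := by rw [div_le_div_iff₀ hR two_pos]; linarith
      have t3 : (N / R) ^ (∑ j, p j) ≤ (N / R) ^ K * ((1:ℝ)/2) ^ (∑ j, p j - K) := by
        calc (N / R) ^ (∑ j, p j) = (N / R) ^ K * (N / R) ^ (∑ j, p j - K) := by
              rw [← pow_add, Nat.add_sub_cancel' hK]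
          _ ≤ (N / R) ^ K * ((1:ℝ)/2) ^ (∑ j, p j - K) :=
              mul_le_mul_of_nonneg_left (pow_le_pow_left₀ ht0 ht2 _) (pow_nonneg ht0 K)
      have h6 : (2:ℝ) ^ K * ((1:ℝ)/2) ^ K = 1 := by rw [← mul_pow]; norm_num
      have t4 : ((1:ℝ)/2) ^ (∑ j, p j - K) = 2 ^ K * ((1:ℝ)/2) ^ (∑ j, p j) := by
        have h5 : ((1:ℝ)/2) ^ (∑ j, p j) = ((1:ℝ)/2) ^ (∑ j, p j - K) * ((1:ℝ)/2) ^ K := by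
          rw [← pow_add, Nat.sub_add_cancel hK]
        rw [h5, show (2:ℝ) ^ K * (((1:ℝ)/2) ^ (∑ j, p j - K) * ((1:ℝ)/2) ^ K) =
          ((1:ℝ)/2) ^ (∑ j, p j - K) * ((2:ℝ) ^ K * ((1:ℝ)/2) ^ K) from by ring, h6, mul_one]
      calc ‖T p (z, v)‖ ≤ A * (N / R) ^ (∑ j, p j) := t1
        _ ≤ A * ((N / R) ^ K * ((1:ℝ)/2) ^ (∑ j, p j - K)) :=
            mul_le_mul_of_nonneg_left t3 hA.le
        _ = (A * 2 ^ K / R ^ K * N ^ K) * ((1:ℝ)/2) ^ (∑ j, p j) := by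
            rw [t4, div_pow]; ring
    have htail : ‖∑' p : ↥((↑P : Set (Fin q → ℕ))ᶜ), T (↑p) (z, v)‖ ≤ ε / 2 * N ^ ν := by
      have hsub1 : Summable fun p : ↥((↑P : Set (Fin q → ℕ))ᶜ) => ‖T (↑p) (z, v)‖ :=
        hnormsum.subtype _
      refine (norm_tsum_le_tsum_norm hsub1).trans ?_
      have hsub2 : Summable fun p : ↥((↑P : Set (Fin q → ℕ))ᶜ) =>
          (A * 2 ^ K / R ^ K * N ^ K) * ((1:ℝ)/2) ^ (∑ j, (↑p : Fin q → ℕ) j) :=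
        (hhalf.mul_left _).subtype _
      have step : (∑' p : ↥((↑P : Set (Fin q → ℕ))ᶜ), ‖T (↑p) (z, v)‖) ≤
          ∑' p : ↥((↑P : Set (Fin q → ℕ))ᶜ),
            (A * 2 ^ K / R ^ K * N ^ K) * ((1:ℝ)/2) ^ (∑ j, (↑p : Fin q → ℕ) j) :=
        Summable.tsum_le_tsum (fun p => htailbound _ (fun hmem => p.2 (Finset.mem_coe.mpr hmem))) hsub1 hsub2
      refine step.trans ?_
      rw [tsum_mul_left]
      have hC1 : 0 ≤ A * 2 ^ K / R ^ K * N ^ K := by positivity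
      have step3 : (∑' p : ↥((↑P : Set (Fin q → ℕ))ᶜ), ((1:ℝ)/2) ^ (∑ j, (↑p : Fin q → ℕ) j))
          ≤ 2 ^ q :=
        le_trans (Summable.tsum_subtype_le _ _ (fun p => by positivity) hhalf) hhalf_tsum
      refine le_trans (mul_le_mul_of_nonneg_left step3 hC1) ?_
      have heqcK : A * 2 ^ K / R ^ K * N ^ K * 2 ^ q = cK * N ^ K := by
        rw [hcKdef, pow_add]; ring
      rw [heqcK]
      rcases eq_or_lt_of_le hN0 with hNeq | hNpos
      · rw [← hNeq, Real.zero_rpow (ne_of_gt hν), zero_pow (by omega : K ≠ 0)]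
        simp
      · have hNK : (N : ℝ) ^ K = N ^ ((K:ℝ) - ν) * N ^ ν := by
          rw [← Real.rpow_natCast N K, ← Real.rpow_add hNpos]
          congr 1
          ring
        rw [hNK, ← mul_assoc]
        refine mul_le_mul_of_nonneg_right ?_ (Real.rpow_nonneg hN0 _)
        have h8 : d ^ ((K:ℝ) - ν) = ε / (2 * cK) :=
          Real.rpow_inv_rpow (by positivity) hKν.ne'
        have h7 : N ^ ((K:ℝ) - ν) ≤ ε / (2 * cK) := by
          rw [← h8]
          exact Real.rpow_le_rpow hN0 hNd hKν.le
        calc cK * N ^ ((K:ℝ) - ν) ≤ cK * (ε / (2 * cK)) :=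
              mul_le_mul_of_nonneg_left h7 hcK0.le
          _ = ε / 2 := by field_simp
    rw [herr]
    have hNν0 : 0 ≤ N ^ ν := Real.rpow_nonneg hN0 _
    have hcard : (P.card : ℝ) * ε₁ ≤ ε / 2 := by
      rw [hε₁def]
      have h1 : (P.card : ℝ) * (ε / (2 * (P.card + 1))) = ε * P.card / (2 * (P.card + 1)) := by
        ring
      rw [h1, div_le_div_iff₀ (by positivity) two_pos]
      nlinarith [hε.le, Nat.cast_nonneg (α := ℝ) P.card]
    calc ‖(∑ p ∈ P, (T p (z, v) - Sp p * ∏ j : Fin q, (v (Fin.natAdd n j)) ^ p j)) +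
          ∑' p : ↥((↑P : Set (Fin q → ℕ))ᶜ), T (↑p) (z, v)‖
        ≤ ‖∑ p ∈ P, (T p (z, v) - Sp p * ∏ j : Fin q, (v (Fin.natAdd n j)) ^ p j)‖ +
          ‖∑' p : ↥((↑P : Set (Fin q → ℕ))ᶜ), T (↑p) (z, v)‖ := norm_add_le _ _
      _ ≤ (∑ p ∈ P, ‖T p (z, v) - Sp p * ∏ j : Fin q, (v (Fin.natAdd n j)) ^ p j‖) +
          ε / 2 * N ^ ν := add_le_add (norm_sum_le _ _) htail
      _ ≤ (∑ _p ∈ P, ε₁ * N ^ ν) + ε / 2 * N ^ ν :=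
          add_le_add (Finset.sum_le_sum hterm) le_rfl
      _ = (P.card : ℝ) * (ε₁ * N ^ ν) + ε / 2 * N ^ ν := by
          rw [Finset.sum_const, nsmul_eq_mul]
      _ ≤ ε * N ^ ν := by
          have h10 := mul_le_mul_of_nonneg_right hcard hNν0
          have h11 : (P.card : ℝ) * (ε₁ * N ^ ν) = (P.card : ℝ) * ε₁ * N ^ ν := by ring
          linarith
end
end
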